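/- arXiv:1710.04107 — 8 statements merged into one kernel-verified Lean document; each statement's English description precedes it below -/
import Mathlib

section
/- Let π, τ ∈ Av(312,213) with τ nonempty. Then: (1) 1⊕π ≼ 1⊕τ if and only if π ≼ τ; (2) 1⊕π ≼ τ⊖1 if and only if 1⊕π ≼ τ; (3) π⊖1 ≼ 1⊕τ if and only if π⊖1 ≼ τ; and (4) π⊖1 ≼ τ⊖1 if and only if π ≼ τ. -/
/-- `l` is the one-line notation of a permutation of `{1, …, l.length}`. -/
def IsPermList (l : List ℕ) : Prop :=
  l.Perm ((List.range l.length).map (· + 1))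

/-- `Involves σ τ` means the permutation (in one-line notation) `σ` is involved in `τ`
(written σ ≼ τ): there is a strictly increasing map of positions matching relative order. -/
def Involves (σ τ : List ℕ) : Prop :=
  ∃ f : Fin σ.length → Fin τ.length, StrictMono f ∧
    ∀ i j : Fin σ.length, σ.get i < σ.get j ↔ τ.get (f i) < τ.get (f j)

/-- Direct sum `σ ⊕ τ` of permutations in one-line notation. -/
def dsum (σ τ : List ℕ) : List ℕ := σ ++ τ.map (· + σ.length)

/-- Skew sum `σ ⊖ τ` of permutations in one-line notation. -/
def ssum (σ τ : List ℕ) : List ℕ := σ.map (· + τ.length) ++ τ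

def NInv (σ τ : List ℕ) : Prop :=
  ∃ f : ℕ → ℕ,
    (∀ i j, i < j → j < σ.length → f i < f j) ∧
    (∀ i, i < σ.length → f i < τ.length) ∧
    (∀ i j, i < σ.length → j < σ.length →
      (σ.getD i 0 < σ.getD j 0 ↔ τ.getD (f i) 0 < τ.getD (f j) 0))

lemma involves_iff (σ τ : List ℕ) : Involves σ τ ↔ NInv σ τ := by
  constructor
  · rintro ⟨f, hm, hc⟩
    refine ⟨fun i => if h : i < σ.length then (f ⟨i, h⟩).val else 0, ?_, ?_, ?_⟩
    · intro i j hij hj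
      have hi : i < σ.length := lt_trans hij hj
      simp only [dif_pos hi, dif_pos hj]
      exact hm (show (⟨i, hi⟩ : Fin σ.length) < ⟨j, hj⟩ from hij)
    · intro i hi
      simp only [dif_pos hi]
      exact (f ⟨i, hi⟩).isLt
    · intro i j hi hj
      have := hc ⟨i, hi⟩ ⟨j, hj⟩
      simp only [dif_pos hi, dif_pos hj]
      simpa [List.getD_eq_getElem, hi, hj, (f _).isLt, List.get_eq_getElem] using this
  · rintro ⟨f, hm, hb, hc⟩
    refine ⟨fun i => ⟨f i.val, hb i.val i.isLt⟩, ?_, ?_⟩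
    · intro a b hab
      exact hm a.val b.val hab b.isLt
    · intro i j
      have := hc i.val j.val i.isLt j.isLt
      simpa [List.getD_eq_getElem, i.isLt, j.isLt, hb i.val i.isLt, hb j.val j.isLt,
        List.get_eq_getElem] using this

lemma perm_ge_one {l : List ℕ} (h : IsPermList l) :
    ∀ i, i < l.length → 1 ≤ l.getD i 0 := by
  intro i hi
  rw [List.getD_eq_getElem l 0 hi]
  have hm : l[i] ∈ l := List.getElem_mem _
  have := h.mem_iff.mp hm
  simp only [List.mem_map, List.mem_range] at this
  omega

lemma len_dsum1 (π : List ℕ) : (dsum [1] π).length = π.length + 1 := by simp [dsum]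
lemma len_ssum1 (π : List ℕ) : (ssum π [1]).length = π.length + 1 := by simp [ssum]

lemma getD_dsum1_zero (π : List ℕ) : (dsum [1] π).getD 0 0 = 1 := rfl

lemma getD_dsum1_pos (π : List ℕ) (k : ℕ) (h1 : 1 ≤ k) (h2 : k < π.length + 1) :
    (dsum [1] π).getD k 0 = π.getD (k - 1) 0 + 1 := by
  obtain ⟨j, rfl⟩ : ∃ j, k = j + 1 := ⟨k - 1, by omega⟩
  have hj : j < π.length := by omega
  simp [dsum, List.getD_eq_getElem _ 0 (show j + 1 < ([1] ++ π.map (· + 1)).length by simp; omega),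
    List.getD_eq_getElem _ 0 hj, List.getElem?_eq_getElem hj]

lemma getD_ssum1_lt (π : List ℕ) (k : ℕ) (h : k < π.length) :
    (ssum π [1]).getD k 0 = π.getD k 0 + 1 := by
  have hk : k < (ssum π [1]).length := by rw [len_ssum1]; omega
  rw [List.getD_eq_getElem _ 0 hk, List.getD_eq_getElem _ 0 h]
  simp [ssum, List.getElem_append_left, h]

lemma getD_ssum1_last (π : List ℕ) : (ssum π [1]).getD π.length 0 = 1 := by
  have hk : π.length < (ssum π [1]).length := by rw [len_ssum1]; omega
  rw [List.getD_eq_getElem _ 0 hk]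
  simp [ssum]

lemma getD_dsum1_ge_one (τ : List ℕ) (k : ℕ) (hk : k < τ.length + 1) :
    1 ≤ (dsum [1] τ).getD k 0 := by
  by_cases h0 : k = 0
  · subst h0; rw [getD_dsum1_zero]
  · rw [getD_dsum1_pos τ k (by omega) hk]; omega

lemma getD_ssum1_ge_one (τ : List ℕ) (k : ℕ) (hk : k < τ.length + 1) :
    1 ≤ (ssum τ [1]).getD k 0 := by
  by_cases h0 : k < τ.length
  · rw [getD_ssum1_lt τ k h0]; omega
  · have : k = τ.length := by omega
    subst this; rw [getD_ssum1_last]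

lemma ninv_single (σ τ : List ℕ) (h1 : σ.length = 1) (h2 : 0 < τ.length) : NInv σ τ := by
  refine ⟨fun _ => 0, ?_, ?_, ?_⟩
  · intro i j hij hj; omega
  · intro _ _; exact h2
  · intro i j hi hj
    have hi0 : i = 0 := by omega
    have hj0 : j = 0 := by omega
    subst hi0; subst hj0; omega

section Parts
variable (π τ : List ℕ)

lemma part1_mp : NInv (dsum [1] π) (dsum [1] τ) → NInv π τ := by
  rintro ⟨g, gm, gb, gc⟩
  have L1 := len_dsum1 π; have L2 := len_dsum1 τ
  refine ⟨fun i => g (i + 1) - 1, ?_, ?_, ?_⟩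
  · intro i j hij hj
    beta_reduce
    have h1 : g 0 < g (i + 1) := gm 0 (i + 1) (by omega) (by omega)
    have h2 : g (i + 1) < g (j + 1) := gm (i + 1) (j + 1) (by omega) (by omega)
    omega
  · intro i hi
    beta_reduce
    have h1 : g 0 < g (i + 1) := gm 0 (i + 1) (by omega) (by omega)
    have h2 := gb (i + 1) (by omega)
    omega
  · intro i j hi hj
    beta_reduce
    have h1 : g 0 < g (i + 1) := gm 0 (i + 1) (by omega) (by omega)
    have h1' : g 0 < g (j + 1) := gm 0 (j + 1) (by omega) (by omega)
    have h2 := gb (i + 1) (by omega)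
    have h2' := gb (j + 1) (by omega)
    have hc := gc (i + 1) (j + 1) (by omega) (by omega)
    rw [getD_dsum1_pos π (i + 1) (by omega) (by omega),
        getD_dsum1_pos π (j + 1) (by omega) (by omega),
        getD_dsum1_pos τ (g (i + 1)) (by omega) (by omega),
        getD_dsum1_pos τ (g (j + 1)) (by omega) (by omega)] at hc
    simp only [Nat.add_sub_cancel] at hc
    omega

lemma part1_mpr (hπ1 : ∀ i, i < π.length → 1 ≤ π.getD i 0)
    (hτ1 : ∀ i, i < τ.length → 1 ≤ τ.getD i 0) :
    NInv π τ → NInv (dsum [1] π) (dsum [1] τ) := by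
  rintro ⟨f, fm, fb, fc⟩
  have L1 := len_dsum1 π; have L2 := len_dsum1 τ
  refine ⟨fun i => if i = 0 then 0 else f (i - 1) + 1, ?_, ?_, ?_⟩
  · intro i j hij hj
    rw [L1] at hj
    have hj0 : ¬ j = 0 := by omega
    by_cases hi0 : i = 0
    · simp only [if_pos hi0, if_neg hj0]; omega
    · simp only [if_neg hi0, if_neg hj0]
      have := fm (i - 1) (j - 1) (by omega) (by omega)
      omega
  · intro i hi
    rw [L1] at hi; rw [L2]
    by_cases hi0 : i = 0
    · simp [hi0]
    · simp only [if_neg hi0]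
      have := fb (i - 1) (by omega)
      omega
  · intro i j hi hj
    rw [L1] at hi hj
    by_cases hi0 : i = 0 <;> by_cases hj0 : j = 0
    · simp only [if_pos hi0, if_pos hj0]
      rw [hi0, hj0]; omega
    · simp only [if_pos hi0, if_neg hj0]
      have hfb := fb (j - 1) (by omega)
      rw [hi0, getD_dsum1_zero, getD_dsum1_zero,
          getD_dsum1_pos π j (by omega) (by omega),
          getD_dsum1_pos τ (f (j - 1) + 1) (by omega) (by omega)]
      simp only [Nat.add_sub_cancel]
      have h1 := hπ1 (j - 1) (by omega)
      have h2 := hτ1 (f (j - 1)) hfb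
      omega
    · simp only [if_pos hj0, if_neg hi0]
      have hfb := fb (i - 1) (by omega)
      rw [hj0, getD_dsum1_zero, getD_dsum1_zero,
          getD_dsum1_pos π i (by omega) (by omega),
          getD_dsum1_pos τ (f (i - 1) + 1) (by omega) (by omega)]
      omega
    · simp only [if_neg hi0, if_neg hj0]
      have hfi := fb (i - 1) (by omega)
      have hfj := fb (j - 1) (by omega)
      rw [getD_dsum1_pos π i (by omega) (by omega),
          getD_dsum1_pos π j (by omega) (by omega),
          getD_dsum1_pos τ (f (i - 1) + 1) (by omega) (by omega),
          getD_dsum1_pos τ (f (j - 1) + 1) (by omega) (by omega)]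
      simp only [Nat.add_sub_cancel]
      have := fc (i - 1) (j - 1) (by omega) (by omega)
      omega

lemma part4_mp : NInv (ssum π [1]) (ssum τ [1]) → NInv π τ := by
  rintro ⟨g, gm, gb, gc⟩
  have L1 := len_ssum1 π; have L2 := len_ssum1 τ
  have gbnd : ∀ i, i < π.length → g i < τ.length := by
    intro i hi
    have h1 : g i < g π.length := gm i π.length hi (by omega)
    have h2 := gb π.length (by omega)
    omega
  refine ⟨g, ?_, gbnd, ?_⟩
  · intro i j hij hj
    exact gm i j hij (by omega)
  · intro i j hi hj
    have hc := gc i j (by omega) (by omega)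
    rw [getD_ssum1_lt π i hi, getD_ssum1_lt π j hj,
        getD_ssum1_lt τ (g i) (gbnd i hi), getD_ssum1_lt τ (g j) (gbnd j hj)] at hc
    omega

lemma part4_mpr (hπ1 : ∀ i, i < π.length → 1 ≤ π.getD i 0)
    (hτ1 : ∀ i, i < τ.length → 1 ≤ τ.getD i 0) :
    NInv π τ → NInv (ssum π [1]) (ssum τ [1]) := by
  rintro ⟨f, fm, fb, fc⟩
  have L1 := len_ssum1 π; have L2 := len_ssum1 τ
  refine ⟨fun i => if i < π.length then f i else τ.length, ?_, ?_, ?_⟩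
  · intro i j hij hj
    rw [L1] at hj
    by_cases hjn : j < π.length
    · have hin : i < π.length := by omega
      simp only [if_pos hin, if_pos hjn]
      exact fm i j hij hjn
    · have hin : i < π.length := by omega
      simp only [if_pos hin, if_neg hjn]
      exact fb i hin
  · intro i hi
    rw [L2]
    by_cases hin : i < π.length
    · simp only [if_pos hin]; have := fb i hin; omega
    · simp only [if_neg hin]; omega
  · intro i j hi hj
    rw [L1] at hi hj
    by_cases hin : i < π.length <;> by_cases hjn : j < π.length
    · simp only [if_pos hin, if_pos hjn]
      rw [getD_ssum1_lt π i hin, getD_ssum1_lt π j hjn,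
          getD_ssum1_lt τ (f i) (fb i hin), getD_ssum1_lt τ (f j) (fb j hjn)]
      have := fc i j hin hjn
      omega
    · have hje : j = π.length := by omega
      subst hje
      simp only [if_pos hin, if_neg hjn]
      rw [getD_ssum1_lt π i hin, getD_ssum1_last π,
          getD_ssum1_lt τ (f i) (fb i hin), getD_ssum1_last τ]
      omega
    · have hie : i = π.length := by omega
      subst hie
      simp only [if_pos hjn, if_neg hin]
      rw [getD_ssum1_lt π j hjn, getD_ssum1_last π,
          getD_ssum1_lt τ (f j) (fb j hjn), getD_ssum1_last τ]
      have h1 := hπ1 j hjn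
      have h2 := hτ1 (f j) (fb j hjn)
      omega
    · have hie : i = π.length := by omega
      have hje : j = π.length := by omega
      subst hie; subst hje
      omega

lemma part2_mp (hπ1 : ∀ i, i < π.length → 1 ≤ π.getD i 0) (hm0 : 0 < τ.length) :
    NInv (dsum [1] π) (ssum τ [1]) → NInv (dsum [1] π) τ := by
  rintro ⟨g, gm, gb, gc⟩
  have L1 := len_dsum1 π; have L2 := len_ssum1 τ
  by_cases hn : π.length = 0
  · exact ninv_single _ _ (by omega) hm0
  · have key : g π.length < τ.length := by
      have hcmp := gc 0 π.length (by omega) (by omega)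
      rw [getD_dsum1_zero, getD_dsum1_pos π π.length (by omega) (by omega)] at hcmp
      have hp := hπ1 (π.length - 1) (by omega)
      have hR := hcmp.mp (by omega)
      by_contra hge
      have hgn : g π.length = τ.length := by
        have := gb π.length (by omega); omega
      rw [hgn, getD_ssum1_last] at hR
      have hb0 := gb 0 (by omega)
      have := getD_ssum1_ge_one τ (g 0) (by omega)
      omega
    have gbnd : ∀ i, i < (dsum [1] π).length → g i < τ.length := by
      intro i hi
      rw [L1] at hi
      by_cases hie : i = π.length
      · subst hie; exact key
      · have := gm i π.length (by omega) (by omega); omega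
    refine ⟨g, gm, gbnd, ?_⟩
    intro i j hi hj
    have hc := gc i j hi hj
    rw [getD_ssum1_lt τ (g i) (gbnd i hi), getD_ssum1_lt τ (g j) (gbnd j hj)] at hc
    omega

lemma part2_mpr : NInv (dsum [1] π) τ → NInv (dsum [1] π) (ssum τ [1]) := by
  rintro ⟨f, fm, fb, fc⟩
  have L2 := len_ssum1 τ
  refine ⟨f, fm, ?_, ?_⟩
  · intro i hi; have := fb i hi; omega
  · intro i j hi hj
    rw [getD_ssum1_lt τ (f i) (fb i hi), getD_ssum1_lt τ (f j) (fb j hj)]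
    have := fc i j hi hj
    omega

lemma part3_mp (hπ1 : ∀ i, i < π.length → 1 ≤ π.getD i 0) (hm0 : 0 < τ.length) :
    NInv (ssum π [1]) (dsum [1] τ) → NInv (ssum π [1]) τ := by
  rintro ⟨g, gm, gb, gc⟩
  have L1 := len_ssum1 π; have L2 := len_dsum1 τ
  by_cases hn : π.length = 0
  · exact ninv_single _ _ (by omega) hm0
  · have key : 1 ≤ g 0 := by
      have hcmp := gc π.length 0 (by omega) (by omega)
      rw [getD_ssum1_last π, getD_ssum1_lt π 0 (by omega)] at hcmp
      have hp := hπ1 0 (by omega)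
      have hR := hcmp.mp (by omega)
      by_contra hge
      have hg0 : g 0 = 0 := by omega
      rw [hg0, getD_dsum1_zero] at hR
      have hbn := gb π.length (by omega)
      have := getD_dsum1_ge_one τ (g π.length) (by omega)
      omega
    have gpos : ∀ i, i < (ssum π [1]).length → 1 ≤ g i := by
      intro i hi
      by_cases hie : i = 0
      · subst hie; exact key
      · have := gm 0 i (by omega) hi; omega
    refine ⟨fun i => g i - 1, ?_, ?_, ?_⟩
    · intro i j hij hj
      beta_reduce
      have h1 := gpos i (by omega)
      have h2 := gm i j hij hj
      omega
    · intro i hi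
      beta_reduce
      have := gb i hi
      have := gpos i hi
      omega
    · intro i j hi hj
      beta_reduce
      have hc := gc i j hi hj
      have hbi := gb i hi; have hbj := gb j hj
      rw [getD_dsum1_pos τ (g i) (gpos i hi) (by omega),
          getD_dsum1_pos τ (g j) (gpos j hj) (by omega)] at hc
      omega

lemma part3_mpr : NInv (ssum π [1]) τ → NInv (ssum π [1]) (dsum [1] τ) := by
  rintro ⟨f, fm, fb, fc⟩
  have L2 := len_dsum1 τ
  refine ⟨fun i => f i + 1, ?_, ?_, ?_⟩
  · intro i j hij hj
    beta_reduce
    have := fm i j hij hj; omega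
  · intro i hi
    beta_reduce
    have := fb i hi; omega
  · intro i j hi hj
    beta_reduce
    rw [getD_dsum1_pos τ (f i + 1) (by omega) (by have := fb i hi; omega),
        getD_dsum1_pos τ (f j + 1) (by omega) (by have := fb j hj; omega)]
    simp only [Nat.add_sub_cancel]
    have := fc i j hi hj
    omega

end Parts


/-- Recursive description of the involvement order on `Av(312, 213)`. -/
theorem order_in_wedges (π τ : List ℕ) (hπ : IsPermList π) (hτ : IsPermList τ)
    (hπC : ¬ Involves [3, 1, 2] π ∧ ¬ Involves [2, 1, 3] π)
    (hτC : ¬ Involves [3, 1, 2] τ ∧ ¬ Involves [2, 1, 3] τ)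
    (hτne : τ ≠ []) :
    (Involves (dsum [1] π) (dsum [1] τ) ↔ Involves π τ) ∧
    (Involves (dsum [1] π) (ssum τ [1]) ↔ Involves (dsum [1] π) τ) ∧
    (Involves (ssum π [1]) (dsum [1] τ) ↔ Involves (ssum π [1]) τ) ∧
    (Involves (ssum π [1]) (ssum τ [1]) ↔ Involves π τ) := by
  have hπ1 := perm_ge_one hπ
  have hτ1 := perm_ge_one hτ
  have hm0 : 0 < τ.length := List.length_pos_iff.mpr hτne
  simp only [involves_iff]
  exact ⟨⟨part1_mp π τ, part1_mpr π τ hπ1 hτ1⟩,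
         ⟨part2_mp π τ hπ1 hm0, part2_mpr π τ⟩,
         ⟨part3_mp π τ hπ1 hm0, part3_mpr π τ⟩,
         ⟨part4_mp π τ, part4_mpr π τ hπ1 hτ1⟩⟩
end

section
/- Let P and Q be (possibly empty) lists of positive integers and let a, b be positive integers. Then for every n, the number of compositions of n avoiding the composition P++[a,b]++Q equals the number of compositions of n avoiding P++[b,a]++Q. -/
/-- The composition `A` is contained in the composition `B`: some sublist of `B`
of the same length as `A` dominates `A` term by term. -/
def CompContains (A B : List ℕ) : Prop :=
  ∃ s : List ℕ, s.Sublist B ∧ List.Forall₂ (· ≤ ·) A s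

/-- Greedy leftmost matching: consume pattern `A` against list `c`, returning
the remaining suffix of `c` after the match, if a match exists. -/
def consume : List ℕ → List ℕ → Option (List ℕ)
  | [], l => some l
  | _ :: _, [] => none
  | a :: A, b :: l => if a ≤ b then consume A l else consume (a :: A) l

lemma consume_nil (c : List ℕ) : consume [] c = some c := by cases c <;> rfl

lemma consume_eq_some {A c l : List ℕ} (h : consume A c = some l) :
    ∃ u s, c = u ++ l ∧ s.Sublist u ∧ List.Forall₂ (· ≤ ·) A s ∧ consume A u = some [] := by
  induction c generalizing A with
  | nil =>
    cases A with
    | nil =>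
      rw [consume_nil] at h
      exact ⟨[], [], by simp [← Option.some.injEq, h], by simp, by simp, rfl⟩
    | cons a A => simp [consume] at h
  | cons x c ih =>
    cases A with
    | nil =>
      rw [consume_nil] at h
      obtain rfl : x :: c = l := Option.some.injEq _ _ ▸ h
      exact ⟨[], [], rfl, by simp, by simp, rfl⟩
    | cons a A =>
      by_cases hax : a ≤ x
      · simp only [consume, if_pos hax] at h
        obtain ⟨u, s, hc, hs, hf, hu⟩ := ih h
        exact ⟨x :: u, x :: s, by simp [hc], hs.cons₂ x, List.Forall₂.cons hax hf,
          by simp [consume, if_pos hax, hu]⟩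
      · simp only [consume, if_neg hax] at h
        obtain ⟨u, s, hc, hs, hf, hu⟩ := ih h
        exact ⟨x :: u, s, by simp [hc], hs.cons x, hf,
          by simp [consume, if_neg hax, hu]⟩

lemma consume_append {A u r : List ℕ} (h : consume A u = some r) (x : List ℕ) :
    consume A (u ++ x) = some (r ++ x) := by
  induction u generalizing A with
  | nil =>
    cases A with
    | nil => simp [consume_nil] at h ⊢; simp [h]
    | cons a A => simp [consume] at h
  | cons y u ih =>
    cases A with
    | nil => simp_all [consume_nil]
    | cons a A =>
      by_cases hay : a ≤ y
      · rw [List.cons_append]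
        simp only [consume, if_pos hay] at h ⊢
        exact ih h
      · rw [List.cons_append]
        simp only [consume, if_neg hay] at h ⊢
        exact ih h

lemma greedy {A s t c : List ℕ} (h1 : List.Forall₂ (· ≤ ·) A s)
    (h2 : (s ++ t).Sublist c) : ∃ l, consume A c = some l ∧ t.Sublist l := by
  induction c generalizing A s t with
  | nil =>
    rw [List.sublist_nil, List.append_eq_nil_iff] at h2
    obtain ⟨rfl, rfl⟩ := h2
    cases h1
    exact ⟨[], rfl, List.Sublist.refl _⟩
  | cons x c ih =>
    cases h1 with
    | nil => exact ⟨x :: c, consume_nil _, h2⟩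
    | @cons a a' A s' hle hf =>
      by_cases hax : a ≤ x
      · have h2' : (s' ++ t).Sublist c := by
          cases h2 with
          | cons _ h => exact ((List.sublist_cons_self a' (s' ++ t)).trans h)
          | cons_cons _ h => exact h
        obtain ⟨l, hl, ht⟩ := ih hf h2'
        exact ⟨l, by simp [consume, if_pos hax, hl], ht⟩
      · have h2' : (a' :: (s' ++ t)).Sublist c := by
          cases h2 with
          | cons _ h => exact h
          | cons_cons _ h => exact absurd (le_trans hle (le_refl x)) hax
        obtain ⟨l, hl, ht⟩ := ih (List.Forall₂.cons hle hf) h2'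
        exact ⟨l, by simp [consume, if_neg hax, hl], ht⟩

lemma forall₂_append_split {A B s : List ℕ} (h : List.Forall₂ (· ≤ ·) (A ++ B) s) :
    ∃ s1 s2, s = s1 ++ s2 ∧ List.Forall₂ (· ≤ ·) A s1 ∧ List.Forall₂ (· ≤ ·) B s2 := by
  induction A generalizing s with
  | nil => exact ⟨[], s, rfl, List.Forall₂.nil, h⟩
  | cons a A ih =>
    cases h with
    | cons hle hf =>
      obtain ⟨s1, s2, rfl, h1, h2⟩ := ih hf
      exact ⟨_ :: s1, s2, rfl, List.Forall₂.cons hle h1, h2⟩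

lemma compContains_append_iff {A B c : List ℕ} :
    CompContains (A ++ B) c ↔ ∃ l, consume A c = some l ∧ CompContains B l := by
  constructor
  · rintro ⟨s, hs, hf⟩
    obtain ⟨s1, s2, rfl, h1, h2⟩ := forall₂_append_split hf
    obtain ⟨l, hl, ht⟩ := greedy h1 hs
    exact ⟨l, hl, s2, ht, h2⟩
  · rintro ⟨l, hl, s2, hs2, hf2⟩
    obtain ⟨u, s1, rfl, hs1, hf1, _⟩ := consume_eq_some hl
    exact ⟨s1 ++ s2, hs1.append hs2, List.rel_append hf1 hf2⟩

lemma compContains_reverse {A c : List ℕ} :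
    CompContains A.reverse c.reverse ↔ CompContains A c := by
  constructor
  · rintro ⟨s, hs, hf⟩
    exact ⟨s.reverse, by simpa using hs.reverse, by simpa using List.rel_reverse hf⟩
  · rintro ⟨s, hs, hf⟩
    exact ⟨s.reverse, hs.reverse, List.rel_reverse hf⟩

/-- The middle-reversing involution. -/
def phi (P Q c : List ℕ) : List ℕ :=
  ((consume P c).bind fun l => (consume Q.reverse l.reverse).map fun m =>
    c.take (c.length - l.length) ++ (l.take m.length).reverse ++ l.drop m.length).getD c

lemma phi_none₁ {P Q c : List ℕ} (h : consume P c = none) : phi P Q c = c := by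
  simp [phi, h]

lemma phi_none₂ {P Q c l : List ℕ} (h1 : consume P c = some l)
    (h2 : consume Q.reverse l.reverse = none) : phi P Q c = c := by
  simp [phi, h1, h2]

lemma phi_some {P Q c l m : List ℕ} (h1 : consume P c = some l)
    (h2 : consume Q.reverse l.reverse = some m) :
    phi P Q c = c.take (c.length - l.length) ++ (l.take m.length).reverse
      ++ l.drop m.length := by
  simp [phi, h1, h2]

lemma compContains_middle_iff {P Q M c : List ℕ} :
    CompContains (P ++ M ++ Q) c ↔
      ∃ l m, consume P c = some l ∧ consume Q.reverse l.reverse = some m ∧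
        CompContains M.reverse m := by
  rw [List.append_assoc, compContains_append_iff]
  constructor
  · rintro ⟨l, hl, hc⟩
    rw [← compContains_reverse, List.reverse_append] at hc
    rw [compContains_append_iff] at hc
    obtain ⟨m, hm, hc⟩ := hc
    exact ⟨l, m, hl, hm, hc⟩
  · rintro ⟨l, m, hl, hm, hc⟩
    refine ⟨l, hl, ?_⟩
    rw [← compContains_reverse, List.reverse_append]
    rw [compContains_append_iff]
    exact ⟨m, hm, hc⟩

section Main

variable {P Q c l m : List ℕ}

lemma main_facts (hl : consume P c = some l) (hm : consume Q.reverse l.reverse = some m) :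
    ∃ u w, l = m.reverse ++ w.reverse ∧ c = u ++ (m.reverse ++ w.reverse) ∧
      phi P Q c = u ++ (m ++ w.reverse) ∧
      consume P u = some [] ∧ consume Q.reverse w = some [] := by
  obtain ⟨u, _, hc, _, _, hu⟩ := consume_eq_some hl
  obtain ⟨w, _, hlr, _, _, hw⟩ := consume_eq_some hm
  have hlrev : l = m.reverse ++ w.reverse := by
    have := congrArg List.reverse hlr
    simpa [List.reverse_append] using this
  refine ⟨u, w, hlrev, by rw [hc, hlrev], ?_, hu, hw⟩
  have htake : l.take m.length = m.reverse := by
    rw [hlrev]; simpa using List.take_left' (by simp)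
  have hdrop : l.drop m.length = w.reverse := by
    rw [hlrev]; simpa using List.drop_left' (by simp)
  have hct : c.take (c.length - l.length) = u := by
    rw [hc]
    have : c.length - l.length = u.length := by rw [hc]; simp
    rw [hc] at this
    rw [this]; exact List.take_left
  rw [phi_some hl hm, htake, hdrop, hct, List.reverse_reverse, List.append_assoc]

lemma phi_perm (P Q c : List ℕ) : (phi P Q c).Perm c := by
  rcases h1 : consume P c with _ | l
  · rw [phi_none₁ h1]
  rcases h2 : consume Q.reverse l.reverse with _ | m
  · rw [phi_none₂ h1 h2]
  obtain ⟨u, w, _, hc, hphi, _, _⟩ := main_facts h1 h2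
  rw [hphi, hc]
  exact List.Perm.append_left u (((List.reverse_perm m).symm).append_right w.reverse)

lemma phi_phi (P Q c : List ℕ) : phi P Q (phi P Q c) = c := by
  rcases h1 : consume P c with _ | l
  · rw [phi_none₁ h1, phi_none₁ h1]
  rcases h2 : consume Q.reverse l.reverse with _ | m
  · rw [phi_none₂ h1 h2, phi_none₂ h1 h2]
  obtain ⟨u, w, hlrev, hc, hphi, hu, hw⟩ := main_facts h1 h2
  have h1' : consume P (phi P Q c) = some (m ++ w.reverse) := by
    rw [hphi]; simpa using consume_append hu (m ++ w.reverse)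
  have h2' : consume Q.reverse (m ++ w.reverse).reverse = some m.reverse := by
    rw [List.reverse_append, List.reverse_reverse]
    simpa using consume_append hw m.reverse
  obtain ⟨u', w', hl', hc', hphi', _, _⟩ := main_facts h1' h2'
  rw [List.reverse_reverse] at hl' hc'
  have hww : w.reverse = w'.reverse := List.append_cancel_left hl'
  rw [← hww] at hc' hphi'
  have huu : u' = u := List.append_cancel_right (hc'.symm.trans hphi)
  rw [hphi', huu, hc]

lemma transfer (P Q : List ℕ) (a b : ℕ) (c : List ℕ) :
    CompContains (P ++ [a, b] ++ Q) c ↔ CompContains (P ++ [b, a] ++ Q) (phi P Q c) := by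
  rcases h1 : consume P c with _ | l
  · rw [phi_none₁ h1, compContains_middle_iff, compContains_middle_iff]
    simp [h1]
  rcases h2 : consume Q.reverse l.reverse with _ | m
  · rw [phi_none₂ h1 h2, compContains_middle_iff, compContains_middle_iff]
    simp [h1, h2]
  obtain ⟨u, w, hlrev, hc, hphi, hu, hw⟩ := main_facts h1 h2
  have h1' : consume P (phi P Q c) = some (m ++ w.reverse) := by
    rw [hphi]; simpa using consume_append hu (m ++ w.reverse)
  have h2' : consume Q.reverse (m ++ w.reverse).reverse = some m.reverse := by
    rw [List.reverse_append, List.reverse_reverse]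
    simpa using consume_append hw m.reverse
  have L : CompContains (P ++ [a, b] ++ Q) c ↔ CompContains [b, a] m := by
    rw [compContains_middle_iff]
    constructor
    · rintro ⟨l', m', hl', hm', hcc⟩
      rw [h1] at hl'; obtain rfl : l = l' := by injection hl'
      rw [h2] at hm'; obtain rfl : m = m' := by injection hm'
      simpa using hcc
    · intro hcc
      exact ⟨l, m, h1, h2, by simpa using hcc⟩
  have R : CompContains (P ++ [b, a] ++ Q) (phi P Q c) ↔ CompContains [a, b] m.reverse := by
    rw [compContains_middle_iff]
    constructor
    · rintro ⟨l', m', hl', hm', hcc⟩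
      rw [h1'] at hl'; obtain rfl : m ++ w.reverse = l' := by injection hl'
      rw [h2'] at hm'; obtain rfl : m.reverse = m' := by injection hm'
      simpa using hcc
    · intro hcc
      exact ⟨m ++ w.reverse, m.reverse, h1', h2', by simpa using hcc⟩
  rw [L, R]
  have := compContains_reverse (A := [b, a]) (c := m)
  simpa using this.symm

end Main

/-- Swapping two adjacent parts of a forbidden composition pattern preserves the number
of compositions of `n` avoiding it. -/
theorem comp_swap_wilf (P Q : List ℕ) (hP : ∀ x ∈ P, 0 < x) (hQ : ∀ x ∈ Q, 0 < x)
    (a b : ℕ) (ha : 0 < a) (hb : 0 < b) (n : ℕ) :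
    Nat.card {c : List ℕ // (∀ x ∈ c, 0 < x) ∧ c.sum = n ∧
        ¬ CompContains (P ++ [a, b] ++ Q) c} =
    Nat.card {c : List ℕ // (∀ x ∈ c, 0 < x) ∧ c.sum = n ∧
        ¬ CompContains (P ++ [b, a] ++ Q) c} := by
  apply Nat.card_congr
  refine ⟨fun x => ⟨phi P Q x.1, ?_, ?_, ?_⟩, fun x => ⟨phi P Q x.1, ?_, ?_, ?_⟩,
    fun x => Subtype.ext (phi_phi P Q x.1), fun x => Subtype.ext (phi_phi P Q x.1)⟩
  · intro y hy; exact x.2.1 y ((phi_perm P Q x.1).mem_iff.mp hy)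
  · rw [(phi_perm P Q x.1).sum_eq]; exact x.2.2.1
  · exact fun h => x.2.2.2 ((transfer P Q a b x.1).mpr h)
  · intro y hy; exact x.2.1 y ((phi_perm P Q x.1).mem_iff.mp hy)
  · rw [(phi_perm P Q x.1).sum_eq]; exact x.2.2.1
  · exact fun h => x.2.2.2 ((transfer P Q b a x.1).mpr h)
end

section
/- Let P and Q be (possibly empty) lists of positive integers. Then for every n, the number of compositions of n avoiding the composition P++[1,1]++Q equals the number of compositions of n avoiding P++[2]++Q. -/
namespace CompMerge
open List

theorem nil_contains (B : List ℕ) : CompContains [] B :=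
  ⟨[], nil_sublist _, List.Forall₂.nil⟩

theorem contains_nil_iff {A : List ℕ} : CompContains A [] ↔ A = [] := by
  constructor
  · rintro ⟨s, hs, hf⟩
    have : s = [] := sublist_nil.1 hs
    subst this
    exact forall₂_nil_right_iff.1 hf
  · rintro rfl; exact nil_contains _

theorem contains_mono {A B C : List ℕ} (h : CompContains A B) (hBC : B <+ C) :
    CompContains A C := by
  obtain ⟨s, hs, hf⟩ := h
  exact ⟨s, hs.trans hBC, hf⟩

theorem contains_cons_cons {a b : ℕ} {A B : List ℕ} :
    CompContains (a :: A) (b :: B) ↔ (a ≤ b ∧ CompContains A B) ∨ CompContains (a :: A) B := by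
  constructor
  · rintro ⟨s, hs, hf⟩
    cases hf with
    | cons hab hf' =>
      cases hs
      case cons hs' => exact Or.inr ⟨_, hs', List.Forall₂.cons hab hf'⟩
      case cons_cons hs' => exact Or.inl ⟨hab, _, hs', hf'⟩
  · rintro (⟨hab, s, hs, hf⟩ | ⟨s, hs, hf⟩)
    · exact ⟨b :: s, hs.cons₂ _, List.Forall₂.cons hab hf⟩
    · exact ⟨s, hs.cons _, hf⟩

/-- Boolean containment test. -/
def cont : List ℕ → List ℕ → Bool
  | [], _ => true
  | _ :: _, [] => false
  | a :: A, b :: B => (decide (a ≤ b) && cont A B) || cont (a :: A) B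

theorem cont_iff : ∀ (A B : List ℕ), cont A B = true ↔ CompContains A B
  | [], B => by simpa [cont] using nil_contains B
  | _ :: _, [] => by simp [cont, contains_nil_iff]
  | a :: A, b :: B => by
    rw [contains_cons_cons, ← cont_iff A B, ← cont_iff (a :: A) B]
    simp [cont]

instance (A B : List ℕ) : Decidable (CompContains A B) :=
  decidable_of_iff _ (cont_iff A B)

theorem contains_append {A B c : List ℕ} :
    CompContains (A ++ B) c ↔
      ∃ k ≤ c.length, CompContains A (c.take k) ∧ CompContains B (c.drop k) := by
  constructor
  · rintro ⟨s, hs, hf⟩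
    have hf' : Forall₂ (flip (· ≤ ·)) s (A ++ B) := hf.flip
    have h₁ := forall₂_take_append s A B hf'
    have h₂ := forall₂_drop_append s A B hf'
    have hs' : s.take A.length ++ s.drop A.length <+ c := by
      rw [take_append_drop]; exact hs
    rw [append_sublist_iff] at hs'
    obtain ⟨c₁, c₂, rfl, hc₁, hc₂⟩ := hs'
    refine ⟨c₁.length, by simp, ?_, ?_⟩
    · rw [take_left]; exact ⟨_, hc₁, h₁.flip⟩
    · rw [drop_left]; exact ⟨_, hc₂, h₂.flip⟩
  · rintro ⟨k, _, ⟨s₁, hs₁, hf₁⟩, ⟨s₂, hs₂, hf₂⟩⟩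
    refine ⟨s₁ ++ s₂, ?_, rel_append hf₁ hf₂⟩
    have := hs₁.append hs₂
    rwa [take_append_drop] at this

theorem contains_one_one {d : List ℕ} (hd : ∀ x ∈ d, 0 < x) :
    CompContains [1, 1] d ↔ 2 ≤ d.length := by
  constructor
  · rintro ⟨s, hs, hf⟩
    have h1 := hf.length_eq
    have h2 := hs.length_le
    simp at h1; omega
  · intro h
    match d, hd, h with
    | a :: b :: d, hd, _ =>
      refine ⟨[a, b], ?_, ?_⟩
      · exact ((nil_sublist d).cons₂ b).cons₂ a
      · exact List.Forall₂.cons (hd a (by simp)) (List.Forall₂.cons (hd b (by simp)) .nil)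

theorem contains_two {d : List ℕ} : CompContains [2] d ↔ ∃ x ∈ d, 2 ≤ x := by
  constructor
  · rintro ⟨s, hs, hf⟩
    cases hf with
    | cons h2 hf' =>
      have := forall₂_nil_left_iff.1 hf'
      subst this
      exact ⟨_, singleton_sublist.1 hs, h2⟩
  · rintro ⟨x, hx, h2⟩
    exact ⟨[x], singleton_sublist.2 hx, List.Forall₂.cons h2 .nil⟩

/-! ### The window machinery -/

variable (P Q : List ℕ)

/-- Minimal `k` with `P` contained in `c.take k` (or `c.length + 1` if none). -/
def kOf (c : List ℕ) : ℕ :=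
  Nat.find (p := fun k => CompContains P (c.take k) ∨ c.length < k)
    ⟨c.length + 1, Or.inr (by omega)⟩

/-- Maximal `j ≤ c.length` with `Q` contained in `c.drop j`. -/
def jOf (c : List ℕ) : ℕ :=
  Nat.findGreatest (fun j => CompContains Q (c.drop j)) c.length

def mid (c : List ℕ) : List ℕ := (c.take (jOf Q c)).drop (kOf P c)

variable {P Q}

theorem kOf_le {c : List ℕ} (h : CompContains P c) : kOf P c ≤ c.length :=
  Nat.find_le (Or.inl (by rwa [take_length]))

theorem kOf_le_of {c : List ℕ} {t : ℕ} (h : CompContains P (c.take t)) : kOf P c ≤ t :=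
  Nat.find_le (Or.inl h)

theorem kOf_spec' (c : List ℕ) :
    CompContains P (c.take (kOf P c)) ∨ c.length < kOf P c :=
  Nat.find_spec (p := fun k => CompContains P (c.take k) ∨ c.length < k)
    ⟨c.length + 1, Or.inr (by omega)⟩

theorem kOf_spec {c : List ℕ} (h : CompContains P c) :
    CompContains P (c.take (kOf P c)) := by
  have h2 := kOf_le h
  rcases kOf_spec' (P := P) c with h1 | h1
  · exact h1
  · omega

theorem kOf_min {c : List ℕ} {t : ℕ} (ht : t < kOf P c) :
    ¬ CompContains P (c.take t) := fun h =>
  Nat.find_min _ ht (Or.inl h)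

theorem jOf_le (c : List ℕ) : jOf Q c ≤ c.length := Nat.findGreatest_le _

theorem jOf_spec {c : List ℕ} (h : CompContains Q c) :
    CompContains Q (c.drop (jOf Q c)) := by
  have h0 : CompContains Q (c.drop 0) := by simpa using h
  exact Nat.findGreatest_spec (P := fun j => CompContains Q (c.drop j)) (Nat.zero_le _) h0

theorem le_jOf {c : List ℕ} {t : ℕ} (htl : t ≤ c.length) (h : CompContains Q (c.drop t)) :
    t ≤ jOf Q c := Nat.le_findGreatest (P := fun j => CompContains Q (c.drop j)) htl h

theorem jOf_max {c : List ℕ} {t : ℕ} (ht : jOf Q c < t) (htl : t ≤ c.length) :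
    ¬ CompContains Q (c.drop t) := Nat.findGreatest_is_greatest (P := fun j => CompContains Q (c.drop j)) ht htl

theorem length_mid {c : List ℕ} : (mid P Q c).length = jOf Q c - kOf P c := by
  have := jOf_le (Q := Q) c
  simp only [mid, length_drop, length_take]
  omega

theorem mid_sublist (c : List ℕ) : mid P Q c <+ c :=
  ((drop_sublist _ _).trans (take_sublist _ _))

theorem mid_eq {c : List ℕ} :
    mid P Q c = (c.drop (kOf P c)).take (jOf Q c - kOf P c) := by
  unfold mid; rw [drop_take]

theorem decomp {c : List ℕ} (hkj : kOf P c ≤ jOf Q c) :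
    c.take (kOf P c) ++ mid P Q c ++ c.drop (jOf Q c) = c := by
  unfold mid
  have h1 : c.take (kOf P c) = (c.take (jOf Q c)).take (kOf P c) := by
    rw [take_take, min_eq_left hkj]
  rw [h1, take_append_drop, take_append_drop]

/-- Membership transfer into the window. -/
theorem mem_window {c : List ℕ} {k m k' j' x : ℕ} (hx : x ∈ (c.drop k).take m)
    (hk : k' ≤ k) (hj : min (k + m) c.length ≤ j') :
    x ∈ (c.take j').drop k' := by
  have hkc : k < c.length := by
    by_contra hcon
    rw [drop_eq_nil_of_le (by omega)] at hx
    simp at hx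
  set m' := min m (c.length - k) with hm'
  have h1 : (c.drop k).take m = (c.drop k).take m' := by
    rw [take_eq_take_iff]
    simp only [length_drop]
    omega
  rw [h1] at hx
  have h2 : c.drop k = (c.drop k').drop (k - k') := by
    rw [drop_drop]; congr 1; omega
  rw [h2] at hx
  have h3 : ((c.drop k').drop (k - k')).take m' <+ (c.drop k').take ((k - k') + m') := by
    rw [take_add]; exact sublist_append_right _ _
  have h4 : (c.drop k').take ((k - k') + m') <+ (c.drop k').take (j' - k') := by
    have he : (c.drop k').take ((k - k') + m')
        = ((c.drop k').take (j' - k')).take ((k - k') + m') := by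
      rw [take_take, min_eq_left (by omega)]
    rw [he]; exact take_sublist _ _
  rw [drop_take]
  exact (h3.trans h4).subset hx

/-- Key characterization of containment of `P ++ [1,1] ++ Q`. -/
theorem contains_one_one_iff {c : List ℕ} (hc : ∀ x ∈ c, 0 < x) :
    CompContains (P ++ [1, 1] ++ Q) c ↔
      CompContains P c ∧ CompContains Q c ∧ kOf P c + 2 ≤ jOf Q c := by
  rw [append_assoc, contains_append]
  constructor
  · rintro ⟨k, hk, h1, h2⟩
    rw [contains_append] at h2
    obtain ⟨m, hm, h21, h22⟩ := h2
    have hlen : 2 ≤ ((c.drop k).take m).length := by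
      rw [contains_one_one (fun x hx => hc x (mem_of_mem_drop (mem_of_mem_take hx)))] at h21
      exact h21
    rw [length_take, length_drop] at hlen
    rw [drop_drop] at h22
    have hPc : CompContains P c := contains_mono h1 (take_sublist _ _)
    have hQc : CompContains Q c := contains_mono h22 (drop_sublist _ _)
    have hk' : kOf P c ≤ k := kOf_le_of h1
    have hj' : min (k + m) c.length ≤ jOf Q c := by
      refine le_jOf (by omega) (contains_mono h22 ?_)
      have he : c.drop (k + m)
          = (c.drop (min (k + m) c.length)).drop (k + m - min (k + m) c.length) := by
        rw [drop_drop]; congr 1; omega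
      rw [he]; exact drop_sublist _ _
    refine ⟨hPc, hQc, by omega⟩
  · rintro ⟨hPc, hQc, hkj⟩
    have hkl := kOf_le hPc
    have hjl := jOf_le (Q := Q) c
    refine ⟨kOf P c, hkl, kOf_spec hPc, ?_⟩
    rw [contains_append]
    refine ⟨jOf Q c - kOf P c, by rw [length_drop]; omega, ?_, ?_⟩
    · rw [contains_one_one (fun x hx => hc x (mem_of_mem_drop (mem_of_mem_take hx)))]
      rw [length_take, length_drop]; omega
    · rw [drop_drop]
      have he : kOf P c + (jOf Q c - kOf P c) = jOf Q c := by omega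
      rw [he]
      exact jOf_spec hQc

/-- Key characterization of containment of `P ++ [2] ++ Q`. -/
theorem contains_two_iff {c : List ℕ} :
    CompContains (P ++ [2] ++ Q) c ↔
      CompContains P c ∧ CompContains Q c ∧ ∃ x ∈ mid P Q c, 2 ≤ x := by
  rw [append_assoc, contains_append]
  constructor
  · rintro ⟨k, hk, h1, h2⟩
    rw [contains_append] at h2
    obtain ⟨m, hm, h21, h22⟩ := h2
    rw [contains_two] at h21
    obtain ⟨x, hx, hx2⟩ := h21
    rw [drop_drop] at h22
    have hPc : CompContains P c := contains_mono h1 (take_sublist _ _)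
    have hQc : CompContains Q c := contains_mono h22 (drop_sublist _ _)
    have hk' : kOf P c ≤ k := kOf_le_of h1
    have hj' : min (k + m) c.length ≤ jOf Q c := by
      refine le_jOf (by omega) (contains_mono h22 ?_)
      have he : c.drop (k + m)
          = (c.drop (min (k + m) c.length)).drop (k + m - min (k + m) c.length) := by
        rw [drop_drop]; congr 1; omega
      rw [he]; exact drop_sublist _ _
    exact ⟨hPc, hQc, x, mem_window hx hk' hj', hx2⟩
  · rintro ⟨hPc, hQc, x, hx, hx2⟩
    have hkl := kOf_le hPc
    have hjl := jOf_le (Q := Q) c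
    have hmidpos : 0 < (mid P Q c).length := length_pos_iff.2 (by rintro h; rw [h] at hx; simp at hx)
    rw [length_mid] at hmidpos
    refine ⟨kOf P c, hkl, kOf_spec hPc, ?_⟩
    rw [contains_append]
    refine ⟨jOf Q c - kOf P c, by rw [length_drop]; omega, ?_, ?_⟩
    · rw [contains_two]
      rw [mid_eq] at hx
      exact ⟨x, hx, hx2⟩
    · rw [drop_drop]
      have he : kOf P c + (jOf Q c - kOf P c) = jOf Q c := by omega
      rw [he]
      exact jOf_spec hQc

/-! ### Stability of the window under replacement -/

section Replace

variable {c W : List ℕ}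

theorem take_replace' (hPc : CompContains P c) {t : ℕ} (ht : t ≤ kOf P c) :
    (c.take (kOf P c) ++ W ++ c.drop (jOf Q c)).take t = c.take t := by
  rw [append_assoc, take_append_of_le_length, take_take, min_eq_left ht]
  rw [length_take]
  have := kOf_le hPc
  omega

theorem length_replace (hPc : CompContains P c) :
    (c.take (kOf P c) ++ W ++ c.drop (jOf Q c)).length
      = kOf P c + W.length + (c.length - jOf Q c) := by
  have := kOf_le hPc
  simp only [length_append, length_take, length_drop]
  omega

theorem drop_replace (hPc : CompContains P c) {u : ℕ} :
    (c.take (kOf P c) ++ W ++ c.drop (jOf Q c)).drop (kOf P c + W.length + u)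
      = c.drop (jOf Q c + u) := by
  have hkl := kOf_le hPc
  have h1 : kOf P c + W.length + u = (c.take (kOf P c) ++ W).length + u := by
    simp only [length_append, length_take]; omega
  rw [h1, drop_length_add_append, drop_drop, Nat.add_comm]

theorem kOf_replace (hPc : CompContains P c) :
    kOf P (c.take (kOf P c) ++ W ++ c.drop (jOf Q c)) = kOf P c := by
  set c' := c.take (kOf P c) ++ W ++ c.drop (jOf Q c) with hc'
  have hkl := kOf_le hPc
  have htake : ∀ t ≤ kOf P c, c'.take t = c.take t := fun t ht => by
    rw [hc']; exact take_replace' (Q := Q) hPc ht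
  have hclen : c'.length = kOf P c + W.length + (c.length - jOf Q c) := by
    rw [hc']; exact length_replace hPc
  have h1 : kOf P c' ≤ kOf P c := by
    apply kOf_le_of
    rw [htake _ le_rfl]
    exact kOf_spec hPc
  have h2 : ¬ kOf P c' < kOf P c := by
    intro hlt
    rcases kOf_spec' (P := P) c' with hs | hs
    · rw [htake _ (le_of_lt hlt)] at hs
      exact kOf_min hlt hs
    · omega
  omega

theorem jOf_replace (hPc : CompContains P c) (hQc : CompContains Q c) :
    jOf Q (c.take (kOf P c) ++ W ++ c.drop (jOf Q c)) = kOf P c + W.length := by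
  set c' := c.take (kOf P c) ++ W ++ c.drop (jOf Q c) with hc'
  have hkl := kOf_le hPc
  have hjl := jOf_le (Q := Q) c
  have hclen : c'.length = kOf P c + W.length + (c.length - jOf Q c) := by
    rw [hc']; exact length_replace hPc
  have hdrop : ∀ u, c'.drop (kOf P c + W.length + u) = c.drop (jOf Q c + u) := fun u => by
    rw [hc']; exact drop_replace (Q := Q) hPc
  have hd0 : c'.drop (kOf P c + W.length) = c.drop (jOf Q c) := by
    have h := hdrop 0
    simpa using h
  have h1 : kOf P c + W.length ≤ jOf Q c' := by
    apply le_jOf (by omega)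
    rw [hd0]
    exact jOf_spec hQc
  have h2 : ¬ kOf P c + W.length < jOf Q c' := by
    intro hlt
    have hjl' := jOf_le (Q := Q) c'
    have hQc' : CompContains Q c' :=
      contains_mono (hd0 ▸ jOf_spec hQc) (drop_sublist _ _)
    have hspec := jOf_spec hQc'
    have hu : jOf Q c' = kOf P c + W.length + (jOf Q c' - (kOf P c + W.length)) := by omega
    rw [hu, hdrop] at hspec
    exact jOf_max (Q := Q) (c := c) (by omega) (by omega) hspec
  omega

theorem mid_replace (hPc : CompContains P c) (hQc : CompContains Q c) :
    mid P Q (c.take (kOf P c) ++ W ++ c.drop (jOf Q c)) = W := by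
  have hkl := kOf_le hPc
  rw [mid, kOf_replace (Q := Q) hPc, jOf_replace hPc hQc]
  have h1 : (c.take (kOf P c) ++ W ++ c.drop (jOf Q c)).take (kOf P c + W.length)
      = c.take (kOf P c) ++ W := by
    rw [append_assoc, ← append_assoc]
    exact take_left' (by simp only [length_append, length_take]; omega)
  rw [h1]
  exact drop_left' (by rw [length_take]; omega)

theorem contains_P_replace (hPc : CompContains P c) :
    CompContains P (c.take (kOf P c) ++ W ++ c.drop (jOf Q c)) :=
  contains_mono (kOf_spec hPc)
    ((sublist_append_left _ _).trans ((sublist_append_left _ _).append_right _))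

theorem contains_Q_replace (hPc : CompContains P c) (hQc : CompContains Q c) :
    CompContains Q (c.take (kOf P c) ++ W ++ c.drop (jOf Q c)) :=
  contains_mono (jOf_spec hQc) (sublist_append_right _ _)

end Replace

/-! ### The bijection -/

variable (P Q)

/-- Forward map: replace the window by a run of `1`s. -/
def Fm (c : List ℕ) : List ℕ :=
  if CompContains P c ∧ CompContains Q c ∧ kOf P c ≤ jOf Q c then
    c.take (kOf P c) ++ List.replicate (mid P Q c).sum 1 ++ c.drop (jOf Q c)
  else c

/-- Backward map: replace the window by a single part (or nothing). -/
def Gm (c : List ℕ) : List ℕ :=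
  if CompContains P c ∧ CompContains Q c ∧ kOf P c ≤ jOf Q c then
    c.take (kOf P c) ++ (if (mid P Q c).sum = 0 then [] else [(mid P Q c).sum])
      ++ c.drop (jOf Q c)
  else c

variable {P Q}

theorem avoid_two_of_not_cond {c : List ℕ}
    (h : ¬(CompContains P c ∧ CompContains Q c ∧ kOf P c ≤ jOf Q c)) :
    ¬ CompContains (P ++ [2] ++ Q) c := by
  intro hcon
  rw [contains_two_iff] at hcon
  obtain ⟨hPc, hQc, x, hx, _⟩ := hcon
  refine h ⟨hPc, hQc, ?_⟩
  have hp : 0 < (mid P Q c).length := length_pos_iff.2 (by rintro he; rw [he] at hx; simp at hx)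
  rw [length_mid] at hp; omega

theorem avoid_one_one_of_not_cond {c : List ℕ} (hpos : ∀ x ∈ c, 0 < x)
    (h : ¬(CompContains P c ∧ CompContains Q c ∧ kOf P c ≤ jOf Q c)) :
    ¬ CompContains (P ++ [1, 1] ++ Q) c := by
  intro hcon
  rw [contains_one_one_iff hpos] at hcon
  obtain ⟨hPc, hQc, hkj⟩ := hcon
  exact h ⟨hPc, hQc, by omega⟩

theorem forward {c : List ℕ} (hpos : ∀ x ∈ c, 0 < x)
    (havoid : ¬ CompContains (P ++ [1, 1] ++ Q) c) :
    (∀ x ∈ Fm P Q c, 0 < x) ∧ (Fm P Q c).sum = c.sum ∧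
      ¬ CompContains (P ++ [2] ++ Q) (Fm P Q c) ∧ Gm P Q (Fm P Q c) = c := by
  by_cases hcond : CompContains P c ∧ CompContains Q c ∧ kOf P c ≤ jOf Q c
  case neg =>
    simp only [Fm, Gm, if_neg hcond]
    exact ⟨hpos, by trivial, avoid_two_of_not_cond hcond, by trivial⟩
  obtain ⟨hPc, hQc, hkj⟩ := hcond
  have hkl := kOf_le hPc
  have hjl := jOf_le (Q := Q) c
  set s := (mid P Q c).sum with hs
  have hF : Fm P Q c = c.take (kOf P c) ++ List.replicate s 1 ++ c.drop (jOf Q c) := by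
    simp only [Fm]; rw [if_pos ⟨hPc, hQc, hkj⟩]
  set c' := c.take (kOf P c) ++ List.replicate s 1 ++ c.drop (jOf Q c) with hc'
  have hdec := decomp (P := P) (Q := Q) hkj
  -- window of c is short
  have hwin : jOf Q c ≤ kOf P c + 1 := by
    rw [contains_one_one_iff hpos] at havoid
    by_contra hcon
    exact havoid ⟨hPc, hQc, by omega⟩
  have hmidlen : (mid P Q c).length ≤ 1 := by rw [length_mid]; omega
  -- basic facts about c'
  have hk' : kOf P c' = kOf P c := by rw [hc']; exact kOf_replace hPc
  have hj' : jOf Q c' = kOf P c + s := by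
    rw [hc']
    have := jOf_replace (W := List.replicate s 1) hPc hQc
    simpa using this
  have hmid' : mid P Q c' = List.replicate s 1 := by rw [hc']; exact mid_replace hPc hQc
  have hP' : CompContains P c' := by rw [hc']; exact contains_P_replace hPc
  have hQ' : CompContains Q c' := by rw [hc']; exact contains_Q_replace hPc hQc
  have hpos' : ∀ x ∈ c', 0 < x := by
    intro x hx
    rw [hc'] at hx
    simp only [mem_append] at hx
    rcases hx with (hx | hx) | hx
    · exact hpos x (mem_of_mem_take hx)
    · rw [mem_replicate] at hx; omega
    · exact hpos x (mem_of_mem_drop hx)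
  have hsum' : c'.sum = c.sum := by
    conv_rhs => rw [← hdec]
    rw [hc']
    simp [sum_append, sum_replicate, hs]
  refine ⟨by rw [hF]; exact hpos', by rw [hF]; exact hsum', ?_, ?_⟩
  · rw [hF]
    rw [contains_two_iff]
    rintro ⟨-, -, x, hx, hx2⟩
    rw [hmid', mem_replicate] at hx
    omega
  · rw [hF]
    have hcond' : CompContains P c' ∧ CompContains Q c' ∧ kOf P c' ≤ jOf Q c' :=
      ⟨hP', hQ', by rw [hk', hj']; omega⟩
    simp only [Gm]
    rw [if_pos hcond', hk', hj', hmid']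
    have hsrep : (List.replicate s 1).sum = s := by simp
    rw [hsrep]
    have htake : c'.take (kOf P c) = c.take (kOf P c) := by
      rw [hc']; exact take_replace' (Q := Q) hPc le_rfl
    have hdrop : c'.drop (kOf P c + s) = c.drop (jOf Q c) := by
      rw [hc']
      have h := drop_replace (Q := Q) (W := List.replicate s 1) hPc (u := 0)
      simpa using h
    rw [htake, hdrop]
    -- now: take k c ++ (if s = 0 then [] else [s]) ++ drop j c = c
    rcases hm : mid P Q c with - | ⟨v, rest⟩
    · have hs0 : s = 0 := by rw [hs, hm]; rfl
      rw [hs0, if_pos rfl]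
      rw [hm] at hdec
      simpa using hdec
    · have hrest : rest = [] := by
        have := hmidlen
        rw [hm] at this
        simp at this
        exact this
      subst hrest
      have hv : 0 < v := hpos v (mem_of_mem_take (mem_of_mem_drop (by rw [← mid, hm]; simp)))
      have hsv : s = v := by rw [hs, hm]; simp
      rw [hsv, if_neg (by omega)]
      rw [hm] at hdec
      exact hdec

theorem backward {c : List ℕ} (hpos : ∀ x ∈ c, 0 < x)
    (havoid : ¬ CompContains (P ++ [2] ++ Q) c) :
    (∀ x ∈ Gm P Q c, 0 < x) ∧ (Gm P Q c).sum = c.sum ∧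
      ¬ CompContains (P ++ [1, 1] ++ Q) (Gm P Q c) ∧ Fm P Q (Gm P Q c) = c := by
  by_cases hcond : CompContains P c ∧ CompContains Q c ∧ kOf P c ≤ jOf Q c
  case neg =>
    simp only [Fm, Gm, if_neg hcond]
    exact ⟨hpos, by trivial, avoid_one_one_of_not_cond hpos hcond, by trivial⟩
  obtain ⟨hPc, hQc, hkj⟩ := hcond
  have hkl := kOf_le hPc
  have hjl := jOf_le (Q := Q) c
  set s := (mid P Q c).sum with hs
  have hdec := decomp (P := P) (Q := Q) hkj
  -- the window of c is all ones
  have hones : ∀ x ∈ mid P Q c, x = 1 := by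
    intro x hx
    rw [contains_two_iff] at havoid
    have h1 : 0 < x := hpos x ((mid_sublist (P := P) (Q := Q) c).subset hx)
    by_contra h2
    exact havoid ⟨hPc, hQc, x, hx, by omega⟩
  have hmrep : mid P Q c = List.replicate (jOf Q c - kOf P c) 1 := by
    rw [eq_replicate_iff]
    exact ⟨length_mid, hones⟩
  have hsval : s = jOf Q c - kOf P c := by rw [hs, hmrep]; simp
  have hG : Gm P Q c = c.take (kOf P c) ++ (if s = 0 then [] else [s]) ++ c.drop (jOf Q c) := by
    simp only [Gm]; rw [if_pos ⟨hPc, hQc, hkj⟩]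
  by_cases hs0 : s = 0
  · -- window empty: G c = c and F c = c
    have hjk : jOf Q c = kOf P c := by omega
    have hmnil : mid P Q c = [] := by rw [hmrep, hjk]; simp
    have hGc : Gm P Q c = c := by
      rw [hG, hs0, if_pos rfl]
      rw [hmnil] at hdec
      simpa using hdec
    have hFc : Fm P Q c = c := by
      simp only [Fm]
      rw [if_pos ⟨hPc, hQc, hkj⟩, ← hs, hs0]
      rw [hmnil] at hdec
      simpa using hdec
    rw [hGc, hFc]
    refine ⟨hpos, rfl, ?_, rfl⟩
    rw [contains_one_one_iff hpos]
    rintro ⟨-, -, h⟩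
    omega
  · have hG' : Gm P Q c = c.take (kOf P c) ++ [s] ++ c.drop (jOf Q c) := by
      rw [hG, if_neg hs0]
    set c'' := c.take (kOf P c) ++ [s] ++ c.drop (jOf Q c) with hc''
    have hk'' : kOf P c'' = kOf P c := by rw [hc'']; exact kOf_replace hPc
    have hj'' : jOf Q c'' = kOf P c + 1 := by
      rw [hc'']
      have := jOf_replace (W := [s]) hPc hQc
      simpa using this
    have hmid'' : mid P Q c'' = [s] := by rw [hc'']; exact mid_replace hPc hQc
    have hP'' : CompContains P c'' := by rw [hc'']; exact contains_P_replace hPc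
    have hQ'' : CompContains Q c'' := by rw [hc'']; exact contains_Q_replace hPc hQc
    have hpos'' : ∀ x ∈ c'', 0 < x := by
      intro x hx
      rw [hc''] at hx
      simp only [mem_append, mem_singleton] at hx
      rcases hx with (hx | hx) | hx
      · exact hpos x (mem_of_mem_take hx)
      · subst hx; omega
      · exact hpos x (mem_of_mem_drop hx)
    have hsum'' : c''.sum = c.sum := by
      conv_rhs => rw [← hdec]
      rw [hc'']
      simp [sum_append, hs]
    refine ⟨by rw [hG']; exact hpos'', by rw [hG']; exact hsum'', ?_, ?_⟩
    · rw [hG', contains_one_one_iff hpos'']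
      rintro ⟨-, -, h⟩
      omega
    · rw [hG']
      simp only [Fm]
      rw [if_pos ⟨hP'', hQ'', by rw [hk'', hj'']; omega⟩]
      rw [hk'', hj'', hmid'']
      have htake : c''.take (kOf P c) = c.take (kOf P c) := by
        rw [hc'']; exact take_replace' (Q := Q) hPc le_rfl
      have hdrop : c''.drop (kOf P c + 1) = c.drop (jOf Q c) := by
        rw [hc'']
        have h := drop_replace (Q := Q) (W := [s]) hPc (u := 0)
        simpa using h
      have hrepsum : ([s] : List ℕ).sum = s := by simp
      rw [hrepsum, htake, hdrop]
      conv_rhs => rw [← hdec]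
      rw [hmrep, hsval]

end CompMerge

/-- Replacing adjacent parts `1, 1` of a forbidden composition pattern by a single part `2`
preserves the number of compositions of `n` avoiding it. -/
theorem comp_merge_wilf (P Q : List ℕ) (hP : ∀ x ∈ P, 0 < x) (hQ : ∀ x ∈ Q, 0 < x)
    (n : ℕ) :
    Nat.card {c : List ℕ // (∀ x ∈ c, 0 < x) ∧ c.sum = n ∧
        ¬ CompContains (P ++ [1, 1] ++ Q) c} =
    Nat.card {c : List ℕ // (∀ x ∈ c, 0 < x) ∧ c.sum = n ∧
        ¬ CompContains (P ++ [2] ++ Q) c} := by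
  apply Nat.card_congr
  refine ⟨fun c => ⟨CompMerge.Fm P Q c.1, ?_⟩, fun c => ⟨CompMerge.Gm P Q c.1, ?_⟩, ?_, ?_⟩
  · obtain ⟨h1, h2, h3⟩ := c.2
    obtain ⟨g1, g2, g3, -⟩ := CompMerge.forward h1 h3
    exact ⟨g1, by rw [g2, h2], g3⟩
  · obtain ⟨h1, h2, h3⟩ := c.2
    obtain ⟨g1, g2, g3, -⟩ := CompMerge.backward h1 h3
    exact ⟨g1, by rw [g2, h2], g3⟩
  · intro c
    apply Subtype.ext
    obtain ⟨h1, h2, h3⟩ := c.2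
    exact (CompMerge.forward h1 h3).2.2.2
  · intro c
    apply Subtype.ext
    obtain ⟨h1, h2, h3⟩ := c.2
    exact (CompMerge.backward h1 h3).2.2.2
end

section
/- Let a be a positive integer and B a composition. For a composition A let F_A denote the formal power series over ℚ whose n-th coefficient is the number of compositions of n avoiding A. Then (1 − X)·(1 − X − X² − ⋯ − X^{a−1})·F_{a::B} = (1 − X) + X^a·F_B, where a::B denotes the composition obtained by prepending the part a to B (for a = 1 the factor 1 − X − ⋯ − X^{a−1} is just 1). -/
/-- The generating function (over ℚ) of compositions avoiding `A`. -/
noncomputable def Fcomp (A : List ℕ) : PowerSeries ℚ :=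
  PowerSeries.mk fun n =>
    (Nat.card {c : List ℕ // (∀ x ∈ c, 0 < x) ∧ c.sum = n ∧ ¬ CompContains A c} : ℚ)

namespace CompGFAux

open Finset PowerSeries

/-- counting function -/
noncomputable def f (A : List ℕ) (n : ℕ) : ℕ :=
  Nat.card {c : List ℕ // (∀ x ∈ c, 0 < x) ∧ c.sum = n ∧ ¬ CompContains A c}

lemma coeff_Fcomp (A : List ℕ) (n : ℕ) :
    PowerSeries.coeff n (Fcomp A) = (f A n : ℚ) := by
  simp [Fcomp, f, PowerSeries.coeff_mk]

instance finite_comp (A : List ℕ) (n : ℕ) :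
    Finite {c : List ℕ // (∀ x ∈ c, 0 < x) ∧ c.sum = n ∧ ¬ CompContains A c} := by
  have hinj : Function.Injective
      (fun c : {c : List ℕ // (∀ x ∈ c, 0 < x) ∧ c.sum = n ∧ ¬ CompContains A c} =>
        (⟨c.1, fun hi => c.2.1 _ hi, c.2.2.1⟩ : Composition n)) := by
    intro x y h
    exact Subtype.ext (congrArg Composition.blocks h)
  exact Finite.of_injective _ hinj

lemma contains_cons_iff {x h : ℕ} {A t : List ℕ} :
    CompContains (x :: A) (h :: t) ↔ (x ≤ h ∧ CompContains A t) ∨ CompContains (x :: A) t := by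
  constructor
  · rintro ⟨s, hs, hf⟩
    rcases List.sublist_cons_iff.mp hs with h1 | ⟨r, rfl, hr⟩
    · exact Or.inr ⟨s, h1, hf⟩
    · obtain ⟨hxh, hAr⟩ := List.forall₂_cons.mp hf
      exact Or.inl ⟨hxh, r, hr, hAr⟩
  · rintro (⟨hxh, s, hs, hf⟩ | ⟨s, hs, hf⟩)
    · exact ⟨h :: s, List.cons_sublist_cons.mpr hs, List.forall₂_cons.mpr ⟨hxh, hf⟩⟩
    · exact ⟨s, hs.trans (List.sublist_cons_self _ _), hf⟩

lemma contains_tail {x : ℕ} {A t : List ℕ} (h : CompContains (x :: A) t) : CompContains A t := by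
  obtain ⟨s, hs, hf⟩ := h
  obtain ⟨b, u', hxb, hAu, rfl⟩ := List.forall₂_cons_left_iff.mp hf
  exact ⟨u', (List.sublist_cons_self b u').trans hs, hAu⟩

lemma contains_cons_of_lt {a h : ℕ} {B t : List ℕ} (hlt : h < a) :
    CompContains (a :: B) (h :: t) ↔ CompContains (a :: B) t := by
  rw [contains_cons_iff]
  constructor
  · rintro (⟨hle, _⟩ | h2)
    · omega
    · exact h2
  · exact Or.inr

lemma contains_cons_of_ge {a h : ℕ} {B t : List ℕ} (hge : a ≤ h) :
    CompContains (a :: B) (h :: t) ↔ CompContains B t := by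
  rw [contains_cons_iff]
  constructor
  · rintro (⟨_, h2⟩ | h2)
    · exact h2
    · exact contains_tail h2
  · exact fun h2 => Or.inl ⟨hge, h2⟩

lemma f_zero (A : List ℕ) (hA : A ≠ []) : f A 0 = 1 := by
  rw [f, Nat.card_eq_one_iff_exists]
  refine ⟨⟨[], by simp, by simp, ?_⟩, ?_⟩
  · rintro ⟨s, hs, hf⟩
    rw [List.sublist_nil] at hs
    subst hs
    exact hA (List.forall₂_nil_right_iff.mp hf)
  · rintro ⟨c, hpos, hsum, hav⟩
    have : c = [] := by
      cases c with
      | nil => rfl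
      | cons x t =>
        exfalso
        have hx := hpos x (by simp)
        simp only [List.sum_cons] at hsum
        omega
    exact Subtype.ext this

lemma nat_card_sigma {ι : Type*} [Fintype ι] (β : ι → Type*) [∀ i, Finite (β i)] :
    Nat.card (Σ i, β i) = ∑ i, Nat.card (β i) := by
  classical
  letI : ∀ i, Fintype (β i) := fun i => Fintype.ofFinite _
  simp [Nat.card_eq_fintype_card, Fintype.card_sigma]

lemma f_rec (a : ℕ) (ha : 0 < a) (B : List ℕ) (n : ℕ) (hn : 0 < n) :
    f (a :: B) n = ∑ h ∈ Finset.Icc 1 n, (if h < a then f (a :: B) (n - h) else f B (n - h)) := by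
  classical
  have hmem : ∀ p : Σ h : {h // h ∈ Finset.Icc 1 n},
      {c : List ℕ // (∀ x ∈ c, 0 < x) ∧ c.sum = n - h.1 ∧
        ¬ CompContains (if h.1 < a then a :: B else B) c},
      (∀ x ∈ (p.1.1 :: p.2.1), 0 < x) ∧ (p.1.1 :: p.2.1).sum = n ∧
        ¬ CompContains (a :: B) (p.1.1 :: p.2.1) := by
    rintro ⟨⟨h, hh⟩, ⟨t, ht1, ht2, ht3⟩⟩
    simp only [Finset.mem_Icc] at hh
    dsimp only at ht2 ht3 ⊢
    refine ⟨?_, ?_, ?_⟩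
    · intro x hx
      rcases List.mem_cons.mp hx with rfl | hx
      · omega
      · exact ht1 x hx
    · simp only [List.sum_cons]; omega
    · by_cases hha : h < a
      · rw [contains_cons_of_lt hha]
        simpa [if_pos hha] using ht3
      · rw [contains_cons_of_ge (by omega)]
        simpa [if_neg hha] using ht3
  let g : (Σ h : {h // h ∈ Finset.Icc 1 n},
      {c : List ℕ // (∀ x ∈ c, 0 < x) ∧ c.sum = n - h.1 ∧
        ¬ CompContains (if h.1 < a then a :: B else B) c}) →
      {c : List ℕ // (∀ x ∈ c, 0 < x) ∧ c.sum = n ∧ ¬ CompContains (a :: B) c} :=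
    fun p => ⟨p.1.1 :: p.2.1, hmem p⟩
  have hbij : Function.Bijective g := by
    constructor
    · rintro ⟨⟨h, hh⟩, ⟨t, htp⟩⟩ ⟨⟨h', hh'⟩, ⟨t', htp'⟩⟩ heq
      simp only [g, Subtype.mk.injEq, List.cons.injEq] at heq
      obtain ⟨rfl, rfl⟩ := heq
      rfl
    · rintro ⟨c, hpos, hsum, hav⟩
      cases c with
      | nil => simp at hsum; omega
      | cons h t =>
        have hh1 : 0 < h := hpos h (by simp)
        simp only [List.sum_cons] at hsum
        have hhmem : h ∈ Finset.Icc 1 n := by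
          rw [Finset.mem_Icc]; omega
        have htav : ¬ CompContains (if h < a then a :: B else B) t := by
          by_cases hha : h < a
          · rw [if_pos hha]; rw [contains_cons_of_lt hha] at hav; exact hav
          · rw [if_neg hha]; rw [contains_cons_of_ge (by omega)] at hav; exact hav
        refine ⟨⟨⟨h, hhmem⟩, ⟨t, fun x hx => hpos x (List.mem_cons_of_mem _ hx),
          (by omega : t.sum = n - h), htav⟩⟩, rfl⟩
  have key := Nat.card_eq_of_bijective g hbij
  rw [f, ← key, nat_card_sigma]
  rw [← Finset.sum_coe_sort (Finset.Icc 1 n)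
    (fun h => if h < a then f (a :: B) (n - h) else f B (n - h))]
  refine Finset.sum_congr rfl fun h _ => ?_
  show f (if h.1 < a then a :: B else B) (n - h.1) = _
  split_ifs <;> rfl

noncomputable def G (a : ℕ) : PowerSeries ℚ :=
  PowerSeries.mk fun n => if a ≤ n then 1 else 0

lemma E1 (a : ℕ) (ha : 0 < a) (B : List ℕ) :
    Fcomp (a :: B) = 1 + (∑ i ∈ Finset.Icc 1 (a - 1), (PowerSeries.X : PowerSeries ℚ) ^ i)
        * Fcomp (a :: B) + G a * Fcomp B := by
  ext n
  rw [map_add, map_add, coeff_Fcomp, PowerSeries.coeff_one, Finset.sum_mul, map_sum]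
  have hsum1 : ∀ i ∈ Finset.Icc 1 (a - 1),
      (PowerSeries.coeff n) ((PowerSeries.X : PowerSeries ℚ) ^ i * Fcomp (a :: B))
        = if i ≤ n then (f (a :: B) (n - i) : ℚ) else 0 := by
    intro i _
    rw [PowerSeries.coeff_X_pow_mul', coeff_Fcomp]
  rw [Finset.sum_congr rfl hsum1]
  have hsum2 : (PowerSeries.coeff n) (G a * Fcomp B)
      = ∑ i ∈ Finset.range (n + 1), (if a ≤ i then 1 else 0) * (f B (n - i) : ℚ) := by
    rw [PowerSeries.coeff_mul, Finset.Nat.sum_antidiagonal_eq_sum_range_succ_mk]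
    refine Finset.sum_congr rfl fun i _ => ?_
    rw [coeff_Fcomp]
    simp [G, PowerSeries.coeff_mk]
  rw [hsum2]
  rcases Nat.eq_zero_or_pos n with rfl | hn
  · rw [if_pos rfl, f_zero (a :: B) (by simp)]
    rw [Finset.sum_eq_zero, Finset.sum_eq_zero]
    · norm_num
    · intro i hi
      simp only [Finset.mem_range] at hi
      rw [if_neg (by omega)]
      ring
    · intro i hi
      simp only [Finset.mem_Icc] at hi
      rw [if_neg (by omega)]
  · rw [if_neg (by omega), f_rec a ha B n hn]
    push_cast
    rw [← Finset.sum_filter_add_sum_filter_not (Finset.Icc 1 n) (· < a)]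
    have h1 : ∑ h ∈ (Finset.Icc 1 n).filter (· < a),
        (if h < a then (f (a :: B) (n - h) : ℚ) else (f B (n - h) : ℚ))
        = ∑ i ∈ Finset.Icc 1 (a - 1), (if i ≤ n then (f (a :: B) (n - i) : ℚ) else 0) := by
      rw [← Finset.sum_filter]
      have hset : (Finset.Icc 1 n).filter (· < a) = (Finset.Icc 1 (a - 1)).filter (· ≤ n) := by
        ext i
        simp only [Finset.mem_filter, Finset.mem_Icc]
        omega
      rw [hset]
      refine Finset.sum_congr rfl fun i hi => ?_
      simp only [Finset.mem_filter, Finset.mem_Icc] at hi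
      rw [if_pos (by omega)]
    have h2 : ∑ h ∈ (Finset.Icc 1 n).filter (fun h => ¬ h < a),
        (if h < a then (f (a :: B) (n - h) : ℚ) else (f B (n - h) : ℚ))
        = ∑ i ∈ Finset.range (n + 1), (if a ≤ i then 1 else 0) * (f B (n - i) : ℚ) := by
      have : ∀ i, (if a ≤ i then (1 : ℚ) else 0) * (f B (n - i) : ℚ)
          = if a ≤ i then (f B (n - i) : ℚ) else 0 := by
        intro i; split_ifs <;> ring
      simp only [this]
      rw [← Finset.sum_filter]
      have hset : (Finset.Icc 1 n).filter (fun h => ¬ h < a)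
          = (Finset.range (n + 1)).filter (fun i => a ≤ i) := by
        ext i
        simp only [Finset.mem_filter, Finset.mem_Icc, Finset.mem_range]
        omega
      rw [hset]
      refine Finset.sum_congr rfl fun i hi => ?_
      simp only [Finset.mem_filter, Finset.mem_range] at hi
      rw [if_neg (by omega)]
    rw [h1, h2]
    ring

lemma E2 (a : ℕ) (ha : 0 < a) :
    (1 - PowerSeries.X) * G a = (PowerSeries.X : PowerSeries ℚ) ^ a := by
  ext n
  rw [sub_mul, one_mul, map_sub, PowerSeries.coeff_X_pow]
  have hX : (PowerSeries.X : PowerSeries ℚ) * G a = PowerSeries.X ^ 1 * G a := by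
    rw [pow_one]
  rw [hX, PowerSeries.coeff_X_pow_mul']
  simp only [G, PowerSeries.coeff_mk]
  split_ifs <;> first | (exfalso; omega) | norm_num

end CompGFAux

/-- The functional equation
`(1 − X)(1 − X − ⋯ − X^{a−1}) F_{a::B} = (1 − X) + X^a F_B`. -/
theorem comp_gf_recurrence (a : ℕ) (ha : 0 < a) (B : List ℕ) (hB : ∀ x ∈ B, 0 < x) :
    (1 - PowerSeries.X) * (1 - ∑ i ∈ Finset.Icc 1 (a - 1), (PowerSeries.X : PowerSeries ℚ) ^ i)
        * Fcomp (a :: B)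
      = (1 - PowerSeries.X) + PowerSeries.X ^ a * Fcomp B := by
  have e1 := CompGFAux.E1 a ha B
  have e2 := CompGFAux.E2 a ha
  linear_combination (1 - PowerSeries.X) * e1 + Fcomp B * e2
end

section
/- Let a be a positive integer and A, B compositions. Write f_C(n) for the number of compositions of n avoiding the composition C. Then f_{a::A}(n) = f_{a::B}(n) for all n if and only if f_A(n) = f_B(n) for all n, where a::A denotes the composition obtained by prepending the part a to A. -/
noncomputable def avc (C : List ℕ) (n : ℕ) : ℕ :=
  Nat.card {c : List ℕ // (∀ x ∈ c, 0 < x) ∧ c.sum = n ∧ ¬ CompContains C c}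

instance finCompSub (n : ℕ) (P : List ℕ → Prop) :
    Finite {c : List ℕ // (∀ x ∈ c, 0 < x) ∧ c.sum = n ∧ P c} := by
  have : Function.Injective
      (fun c : {c : List ℕ // (∀ x ∈ c, 0 < x) ∧ c.sum = n ∧ P c} =>
        (⟨c.1, fun hi => c.2.1 _ hi, c.2.2.1⟩ : Composition n)) := by
    rintro ⟨c, hc⟩ ⟨d, hd⟩ h
    simpa [Composition.ext_iff] using h
  exact Finite.of_injective _ this

lemma compContains_cons_iff (a m : ℕ) (A q : List ℕ) :
    CompContains (a :: A) (m :: q) ↔ (a ≤ m ∧ CompContains A q) ∨ CompContains (a :: A) q := by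
  constructor
  · rintro ⟨s, hs, hf⟩
    cases hf with
    | cons h hf' =>
      cases hs with
      | cons _ hs' => exact Or.inr ⟨_, hs', List.Forall₂.cons h hf'⟩
      | cons_cons _ hs' => exact Or.inl ⟨h, _, hs', hf'⟩
  · rintro (⟨ham, s, hs, hf⟩ | ⟨s, hs, hf⟩)
    · exact ⟨m :: s, hs.cons₂ m, List.Forall₂.cons ham hf⟩
    · exact ⟨s, hs.cons m, hf⟩

lemma compContains_of_cons {a : ℕ} {A c : List ℕ} (h : CompContains (a :: A) c) :
    CompContains A c := by
  obtain ⟨s, hs, hf⟩ := h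
  cases hf with
  | cons _ hf' => exact ⟨_, ((List.sublist_cons_self _ _).trans hs), hf'⟩

lemma card_cons (n : ℕ) (P : List ℕ → Prop) :
    Nat.card {c : List ℕ // (∀ x ∈ c, 0 < x) ∧ c.sum = n + 1 ∧ P c} =
    ∑ m ∈ Finset.range (n + 1),
      Nat.card {q : List ℕ // (∀ x ∈ q, 0 < x) ∧ q.sum = n - m ∧ P ((m + 1) :: q)} := by
  haveI : ∀ i : Fin (n + 1),
      Fintype {q : List ℕ // (∀ x ∈ q, 0 < x) ∧ q.sum = n - (i : ℕ) ∧ P (((i : ℕ) + 1) :: q)} :=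
    fun i => Fintype.ofFinite _
  have key : Nat.card ((m : Fin (n + 1)) ×
      {q : List ℕ // (∀ x ∈ q, 0 < x) ∧ q.sum = n - (m : ℕ) ∧ P (((m : ℕ) + 1) :: q)}) =
      Nat.card {c : List ℕ // (∀ x ∈ c, 0 < x) ∧ c.sum = n + 1 ∧ P c} := by
    have hg : ∀ x : ((m : Fin (n + 1)) ×
        {q : List ℕ // (∀ x ∈ q, 0 < x) ∧ q.sum = n - (m : ℕ) ∧ P (((m : ℕ) + 1) :: q)}),
        (∀ y ∈ ((x.1 : ℕ) + 1) :: x.2.1, 0 < y) ∧ (((x.1 : ℕ) + 1) :: x.2.1).sum = n + 1 ∧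
          P (((x.1 : ℕ) + 1) :: x.2.1) := by
      rintro ⟨m, q, hq1, hq2, hq3⟩
      refine ⟨?_, ?_, hq3⟩
      · rintro y hy
        rcases List.mem_cons.1 hy with h | h
        · omega
        · exact hq1 y h
      · have hm := m.2
        simp only [List.sum_cons]
        omega
    apply Nat.card_eq_of_bijective (fun x => ⟨((x.1 : ℕ) + 1) :: x.2.1, hg x⟩)
    constructor
    · rintro ⟨m₁, q₁, h₁⟩ ⟨m₂, q₂, h₂⟩ h
      simp only [Subtype.mk.injEq, List.cons.injEq] at h
      obtain ⟨h1, h2⟩ := h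
      have hm : m₁ = m₂ := Fin.ext (by omega)
      subst hm
      have hqe : (⟨q₁, h₁⟩ : {q : List ℕ // (∀ x ∈ q, 0 < x) ∧ q.sum = n - (m₁ : ℕ) ∧
          P (((m₁ : ℕ) + 1) :: q)}) = ⟨q₂, h₂⟩ := Subtype.ext h2
      rw [hqe]
    · rintro ⟨c, hpos, hsum, hP⟩
      match c with
      | [] => simp at hsum
      | x :: q =>
        have hx : 0 < x := hpos x (by simp)
        simp only [List.sum_cons] at hsum
        have hq : q.sum = n + 1 - x := by omega
        have hxle : x ≤ n + 1 := by omega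
        have hx1 : x - 1 + 1 = x := by omega
        refine ⟨⟨⟨x - 1, by omega⟩, ⟨q, fun y hy => hpos y (by simp [hy]), by
          simp only; omega, by rw [hx1]; exact hP⟩⟩, ?_⟩
        simp [hx1]
  rw [← key, Nat.card_eq_fintype_card, Fintype.card_sigma, ← Fin.sum_univ_eq_sum_range]
  exact Finset.sum_congr rfl fun m _ => (Nat.card_eq_fintype_card).symm

lemma avc_cons_rec (a : ℕ) (A : List ℕ) (n : ℕ) :
    avc (a :: A) (n + 1) =
    ∑ m ∈ Finset.range (n + 1),
      (if m + 1 < a then avc (a :: A) (n - m) else avc A (n - m)) := by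
  rw [avc, card_cons]
  refine Finset.sum_congr rfl fun m _ => ?_
  by_cases hma : m + 1 < a
  · rw [if_pos hma, avc]
    apply Nat.card_congr
    apply Equiv.subtypeEquivRight
    intro q
    have : ¬ CompContains (a :: A) ((m + 1) :: q) ↔ ¬ CompContains (a :: A) q := by
      rw [compContains_cons_iff]
      constructor
      · intro h hq; exact h (Or.inr hq)
      · rintro h (⟨h1, _⟩ | h2)
        · omega
        · exact h h2
    tauto
  · rw [if_neg hma, avc]
    apply Nat.card_congr
    apply Equiv.subtypeEquivRight
    intro q
    have : ¬ CompContains (a :: A) ((m + 1) :: q) ↔ ¬ CompContains A q := by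
      rw [compContains_cons_iff]
      constructor
      · intro h hq; exact h (Or.inl ⟨by omega, hq⟩)
      · rintro h (⟨_, h1⟩ | h2)
        · exact h h1
        · exact h (compContains_of_cons h2)
    tauto
  
lemma avc_cons_zero (a : ℕ) (A : List ℕ) : avc (a :: A) 0 = 1 := by
  rw [avc, Nat.card_eq_one_iff_unique]
  have hnil : ∀ c : List ℕ, (∀ x ∈ c, 0 < x) → c.sum = 0 → c = [] := by
    intro c hpos hsum
    match c with
    | [] => rfl
    | x :: q => have := hpos x (by simp); simp at hsum; omega
  constructor
  · constructor
    rintro ⟨c, hc⟩ ⟨d, hd⟩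
    have : c = [] := hnil c hc.1 hc.2.1
    have : d = [] := hnil d hd.1 hd.2.1
    simp_all
  · refine ⟨⟨[], by simp, by simp, ?_⟩⟩
    rintro ⟨s, hs, hf⟩
    rw [List.sublist_nil] at hs
    subst hs
    cases hf

/-- Cancellation of the first part: `a::A` and `a::B` are Wilf-equivalent composition
patterns iff `A` and `B` are. -/
theorem comp_cancel_first_part (a : ℕ) (ha : 0 < a) (A B : List ℕ)
    (hA : ∀ x ∈ A, 0 < x) (hB : ∀ x ∈ B, 0 < x) :
    (∀ n : ℕ,
        Nat.card {c : List ℕ // (∀ x ∈ c, 0 < x) ∧ c.sum = n ∧ ¬ CompContains (a :: A) c} =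
        Nat.card {c : List ℕ // (∀ x ∈ c, 0 < x) ∧ c.sum = n ∧ ¬ CompContains (a :: B) c}) ↔
    (∀ n : ℕ,
        Nat.card {c : List ℕ // (∀ x ∈ c, 0 < x) ∧ c.sum = n ∧ ¬ CompContains A c} =
        Nat.card {c : List ℕ // (∀ x ∈ c, 0 < x) ∧ c.sum = n ∧ ¬ CompContains B c}) := by
  have reform : (∀ n, avc (a :: A) n = avc (a :: B) n) ↔ (∀ n, avc A n = avc B n) := by
    constructor
    · -- forward: strong induction
      intro H
      intro n
      induction n using Nat.strong_induction_on with
      | _ n IH =>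
        have hkey := H (n + a)
        have hna : n + a = (n + a - 1) + 1 := by omega
        rw [hna, avc_cons_rec, avc_cons_rec] at hkey
        -- isolate the term m = a - 1
        have hmem : a - 1 ∈ Finset.range (n + a - 1 + 1) := by
          simp; omega
        rw [← Finset.sum_erase_add _ _ hmem, ← Finset.sum_erase_add _ _ hmem] at hkey
        have hsame : ∑ m ∈ (Finset.range (n + a - 1 + 1)).erase (a - 1),
            (if m + 1 < a then avc (a :: A) (n + a - 1 - m) else avc A (n + a - 1 - m)) =
            ∑ m ∈ (Finset.range (n + a - 1 + 1)).erase (a - 1),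
            (if m + 1 < a then avc (a :: B) (n + a - 1 - m) else avc B (n + a - 1 - m)) := by
          refine Finset.sum_congr rfl fun m hm => ?_
          simp only [Finset.mem_erase, Finset.mem_range] at hm
          by_cases hma : m + 1 < a
          · rw [if_pos hma, if_pos hma]; exact H _
          · rw [if_neg hma, if_neg hma]
            exact IH (n + a - 1 - m) (by omega)
        rw [hsame] at hkey
        have hterm : (if (a - 1) + 1 < a then avc (a :: A) (n + a - 1 - (a - 1))
            else avc A (n + a - 1 - (a - 1))) =
            (if (a - 1) + 1 < a then avc (a :: B) (n + a - 1 - (a - 1))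
            else avc B (n + a - 1 - (a - 1))) := Nat.add_left_cancel hkey
        have hlt : ¬ ((a - 1) + 1 < a) := by omega
        rw [if_neg hlt, if_neg hlt] at hterm
        have harg : n + a - 1 - (a - 1) = n := by omega
        rwa [harg] at hterm
    · intro H n
      induction n using Nat.strong_induction_on with
      | _ n IH =>
        match n with
        | 0 => rw [avc_cons_zero, avc_cons_zero]
        | Nat.succ k =>
          rw [avc_cons_rec, avc_cons_rec]
          refine Finset.sum_congr rfl fun m hm => ?_
          simp only [Finset.mem_range] at hm
          by_cases hma : m + 1 < a
          · rw [if_pos hma, if_pos hma]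
            exact IH (k - m) (by omega)
          · rw [if_neg hma, if_neg hma]
            exact H _
  exact reform
end

section
/- Let a > 2 be an integer and let r_a be the least positive real root of 1 − t − t² − ⋯ − t^{a−1} (such a root exists and lies in (0,1)). Let B be a nonempty weakly decreasing list of positive integers (a partition) all of whose parts are strictly less than a, and write f_B(n) for the number of compositions of n avoiding B. Then the series Σ_{n≥0} f_B(n)·r_a^n converges (equivalently, lim_{t→r_a⁻} Σ_n f_B(n) t^n exists and is finite). -/
namespace CompGF

def bigIdx (p : ℕ → Bool) : List ℕ → List ℕ
  | [] => []
  | x :: t => if p x then 0 :: (bigIdx p t).map (· + 1) else (bigIdx p t).map (· + 1)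

lemma bigIdx_length (p : ℕ → Bool) : ∀ l : List ℕ, (bigIdx p l).length = (l.filter p).length
  | [] => rfl
  | x :: t => by
    by_cases h : p x <;> simp [bigIdx, h, List.filter_cons, bigIdx_length p t]

lemma bigIdx_lt (p : ℕ → Bool) : ∀ l : List ℕ, ∀ x ∈ bigIdx p l, x < l.length
  | [] => by simp [bigIdx]
  | y :: t => by
    intro x hx
    by_cases h : p y <;> simp [bigIdx, h] at hx
    · rcases hx with rfl | ⟨z, hz, rfl⟩
      · simp
      · have := bigIdx_lt p t z hz; simp; omega
    · obtain ⟨z, hz, rfl⟩ := hx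
      have := bigIdx_lt p t z hz; simp; omega

lemma recon (p : ℕ → Bool) : ∀ c c' : List ℕ,
    c.filter p = c'.filter p →
    c.filter (fun x => !p x) = c'.filter (fun x => !p x) →
    bigIdx p c = bigIdx p c' → c = c'
  | [], [], _, _, _ => rfl
  | [], y :: t', h1, h2, _ => by
    by_cases h : p y <;> simp [List.filter_cons, h] at h1 h2
  | x :: t, [], h1, h2, _ => by
    by_cases h : p x <;> simp [List.filter_cons, h] at h1 h2
  | x :: t, y :: t', h1, h2, h3 => by
    by_cases hx : p x <;> by_cases hy : p y <;>
      simp only [List.filter_cons, hx, hy, bigIdx, if_true, if_false, Bool.not_true,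
        Bool.not_false, cond_true, cond_false, List.cons.injEq] at h1 h2 h3 ⊢
    · exact ⟨h1.1, recon p t t' h1.2 h2 (List.map_injective_iff.2 (add_left_injective 1) h3.2)⟩
    · cases hB : bigIdx p t' <;> rw [hB] at h3 <;> simp at h3
    · cases hB : bigIdx p t <;> rw [hB] at h3 <;> simp at h3
    · exact ⟨h2.1, recon p t t' h1 h2.2 (List.map_injective_iff.2 (add_left_injective 1) h3)⟩

lemma avoid_filter_lt (b : ℕ) (B c : List ℕ)
    (hmax : ∀ x ∈ B, x ≤ b) (hav : ¬ CompContains B c) :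
    (c.filter (fun x => decide (b ≤ x))).length < B.length := by
  by_contra h
  push_neg at h
  apply hav
  refine ⟨(c.filter (fun x => decide (b ≤ x))).take B.length, ?_, ?_⟩
  · exact (List.take_sublist _ _).trans List.filter_sublist
  · rw [List.forall₂_iff_get]
    refine ⟨by simp [List.length_take]; omega, ?_⟩
    intro i h1 h2
    have hmem : (List.take B.length (c.filter (fun x => decide (b ≤ x)))).get ⟨i, h2⟩
        ∈ c.filter (fun x => decide (b ≤ x)) :=
      (List.take_subset _ _) (List.get_mem _ _)
    have h3 := (List.mem_filter.1 hmem).2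
    simp only [decide_eq_true_eq] at h3
    exact le_trans (hmax _ (List.get_mem _ _)) h3

lemma card_bounded (len bnd : ℕ) :
    Finite {l : List ℕ // l.length ≤ len ∧ ∀ x ∈ l, x ≤ bnd} ∧
    Nat.card {l : List ℕ // l.length ≤ len ∧ ∀ x ∈ l, x ≤ bnd} ≤ (len + 1) * (bnd + 1) ^ len := by
  classical
  set F : {l : List ℕ // l.length ≤ len ∧ ∀ x ∈ l, x ≤ bnd} →
      Fin (len + 1) × (Fin len → Fin (bnd + 1)) := fun l =>
    (⟨l.val.length, Nat.lt_succ_of_le l.2.1⟩,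
     fun i => if h : (i : ℕ) < l.val.length then
        ⟨l.val.get ⟨i, h⟩, Nat.lt_succ_of_le (l.2.2 _ (l.val.get_mem _))⟩
      else ⟨0, Nat.succ_pos _⟩) with hF
  have hinj : Function.Injective F := by
    rintro ⟨l, hl⟩ ⟨l', hl'⟩ h
    simp only [hF, Prod.mk.injEq, Fin.mk.injEq] at h
    obtain ⟨hlen, hfun⟩ := h
    refine Subtype.ext (List.ext_get hlen fun i h1 h2 => ?_)
    have h4 := congrFun hfun ⟨i, lt_of_lt_of_le h1 hl.1⟩
    rw [dif_pos h1, dif_pos h2] at h4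
    exact congrArg Fin.val h4
  refine ⟨Finite.of_injective F hinj, ?_⟩
  have := Nat.card_le_card_of_injective F hinj
  simpa [Nat.card_eq_fintype_card] using this

/-- small compositions: positive parts, sum `m`, parts `≤ d`. -/
abbrev Sm (d m : ℕ) : Type := {S : List ℕ // (∀ x ∈ S, 0 < x) ∧ S.sum = m ∧ ∀ x ∈ S, x ≤ d}

instance SmFinite (d m : ℕ) : Finite (Sm d m) := by
  have h := (card_bounded m d).1
  exact Finite.of_injective (fun S : Sm d m =>
    (⟨S.val, by
        refine ⟨?_, S.2.2.2⟩
        have h2 := List.length_le_sum_of_one_le S.val S.2.1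
        have h3 := S.2.2.1
        omega⟩ : {l : List ℕ // l.length ≤ m ∧ ∀ x ∈ l, x ≤ d}))
    (fun S S' h => Subtype.ext (congrArg (fun z : {l : List ℕ // l.length ≤ m ∧ ∀ x ∈ l, x ≤ d} => z.val) h))

lemma Sm_zero (d : ℕ) : Nat.card (Sm d 0) = 1 := by
  haveI : Unique (Sm d 0) := by
    refine ⟨⟨⟨[], by simp⟩⟩, ?_⟩
    rintro ⟨l, h1, h2, h3⟩
    have : l = [] := by
      cases l with
      | nil => rfl
      | cons x t =>
        exfalso
        have hx := h1 x List.mem_cons_self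
        simp [List.sum_cons] at h2
        omega
    subst this
    rfl
  exact Nat.card_unique

lemma Sm_rec (d m : ℕ) (hm : 0 < m) :
    Nat.card (Sm d m) ≤ ∑ i ∈ Finset.Icc 1 (min d m), Nat.card (Sm d (m - i)) := by
  classical
  have hne : ∀ S : Sm d m, S.val ≠ [] := by
    rintro S h
    have h2 := S.2.2.1
    rw [h] at h2
    simp at h2
    omega
  set G : Sm d m → (i : ↥(Finset.Icc 1 (min d m))) × Sm d (m - i) := fun S =>
    ⟨⟨S.val.head (hne S), by
        rw [Finset.mem_Icc]
        refine ⟨S.2.1 _ (List.head_mem (hne S)), le_min (S.2.2.2 _ (List.head_mem (hne S))) ?_⟩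
        have h5 := List.le_sum_of_mem (List.head_mem (hne S))
        rw [S.2.2.1] at h5
        exact h5⟩,
      ⟨S.val.tail, fun x hx => S.2.1 x (List.mem_of_mem_tail hx), by
        show S.val.tail.sum = m - S.val.head (hne S)
        have hs : S.val.head (hne S) + S.val.tail.sum = m := by
          conv_rhs => rw [← S.2.2.1, ← List.cons_head_tail (hne S)]
          rw [List.sum_cons]
        omega, fun x hx => S.2.2.2 x (List.mem_of_mem_tail hx)⟩⟩ with hG
  have hinj : Function.Injective G := by
    intro S S' h
    have hh : S.val.head (hne S) = S'.val.head (hne S') := congrArg (fun p => (p.1 : ℕ)) h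
    have ht : S.val.tail = S'.val.tail := congrArg (fun p => p.2.val) h
    apply Subtype.ext
    rw [← List.cons_head_tail (hne S), ← List.cons_head_tail (hne S'), hh, ht]
  have hle := Nat.card_le_card_of_injective G hinj
  refine le_trans hle ?_
  letI : ∀ i : ↥(Finset.Icc 1 (min d m)), Fintype (Sm d (m - i)) := fun i => Fintype.ofFinite _
  rw [Nat.card_eq_fintype_card, Fintype.card_sigma]
  rw [← Finset.sum_coe_sort (Finset.Icc 1 (min d m)) (fun i => Nat.card (Sm d (m - i)))]
  exact le_of_eq (Finset.sum_congr rfl fun i _ => Nat.card_eq_fintype_card.symm)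

lemma Sm_bound (d : ℕ) (ρ : ℝ) (h0 : 0 < ρ) (h1 : ρ ≤ 1)
    (hq : ∑ i ∈ Finset.Icc 1 d, ρ ^ i ≤ 1) :
    ∀ m : ℕ, (Nat.card (Sm d m) : ℝ) * ρ ^ m ≤ 1 := by
  intro m
  induction m using Nat.strong_induction_on with
  | _ m ih =>
    rcases Nat.eq_zero_or_pos m with rfl | hm
    · simp [Sm_zero]
    · have h2 : (Nat.card (Sm d m) : ℝ) ≤
          ∑ i ∈ Finset.Icc 1 (min d m), (Nat.card (Sm d (m - i)) : ℝ) := by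
        have := Sm_rec d m hm
        exact_mod_cast this
      have h3 : (Nat.card (Sm d m) : ℝ) * ρ ^ m ≤
          ∑ i ∈ Finset.Icc 1 (min d m), (Nat.card (Sm d (m - i)) : ℝ) * ρ ^ m := by
        rw [← Finset.sum_mul]
        exact mul_le_mul_of_nonneg_right h2 (pow_nonneg h0.le m)
      have hsub : ∑ i ∈ Finset.Icc 1 (min d m), ρ ^ i ≤ ∑ i ∈ Finset.Icc 1 d, ρ ^ i :=
        Finset.sum_le_sum_of_subset_of_nonneg
          (Finset.Icc_subset_Icc le_rfl (min_le_left d m))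
          (fun i _ _ => pow_nonneg h0.le i)
      refine le_trans h3 (le_trans (Finset.sum_le_sum ?_) (le_trans hsub hq))
      intro i hi
      rw [Finset.mem_Icc, le_min_iff] at hi
      have hmi : m - i < m := by omega
      have hpow : ρ ^ m ≤ ρ ^ (m - i) * ρ ^ i := by
        rw [← pow_add]
        exact pow_le_pow_of_le_one h0.le h1 (by omega)
      calc (Nat.card (Sm d (m - i)) : ℝ) * ρ ^ m
          ≤ (Nat.card (Sm d (m - i)) : ℝ) * (ρ ^ (m - i) * ρ ^ i) :=
            mul_le_mul_of_nonneg_left hpow (Nat.cast_nonneg _)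
        _ = ((Nat.card (Sm d (m - i)) : ℝ) * ρ ^ (m - i)) * ρ ^ i := by ring
        _ ≤ 1 * ρ ^ i := mul_le_mul_of_nonneg_right (ih _ hmi) (pow_nonneg h0.le i)
        _ = ρ ^ i := one_mul _

end CompGF

/-- If `a > 2`, `r_a` is the least positive root of `1 − t − ⋯ − t^{a−1}` (which lies in
`(0,1)`), and `B` is a nonempty partition with all parts `< a`, then the generating function
of compositions avoiding `B` converges at `r_a`. -/
theorem comp_gf_converges (a : ℕ) (ha : 2 < a) (r : ℝ) (hr0 : 0 < r) (hr1 : r < 1)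
    (hroot : 1 - ∑ i ∈ Finset.Icc 1 (a - 1), r ^ i = 0)
    (hleast : ∀ s : ℝ, 0 < s → 1 - ∑ i ∈ Finset.Icc 1 (a - 1), s ^ i = 0 → r ≤ s)
    (B : List ℕ) (hBne : B ≠ []) (hBdec : B.Pairwise (· ≥ ·))
    (hBpos : ∀ x ∈ B, 0 < x) (hBlt : ∀ x ∈ B, x < a) :
    Summable (fun n : ℕ =>
      (Nat.card {c : List ℕ // (∀ x ∈ c, 0 < x) ∧ c.sum = n ∧ ¬ CompContains B c} : ℝ)
        * r ^ n) := by
  classical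
  obtain ⟨b, tB, rfl⟩ := List.exists_cons_of_ne_nil hBne
  set k := tB.length + 1 with hk
  have hmax : ∀ x ∈ b :: tB, x ≤ b := by
    intro x hx
    rcases List.mem_cons.1 hx with rfl | hx
    · exact le_rfl
    · exact (List.pairwise_cons.1 hBdec).1 x hx
  have hb_lt : b < a := hBlt b List.mem_cons_self
  set d := a - 2 with hd
  have hsum_r : ∑ i ∈ Finset.Icc 1 (a - 1), r ^ i = 1 := by linarith
  have hlt : ∑ i ∈ Finset.Icc 1 d, r ^ i < 1 := by
    have ha1 : a - 1 = d + 1 := by omega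
    rw [ha1, Finset.sum_Icc_succ_top (by omega : 1 ≤ d + 1)] at hsum_r
    nlinarith [pow_pos hr0 (d + 1)]
  obtain ⟨ρ, hρr, hρ1, hρq⟩ : ∃ ρ : ℝ, r < ρ ∧ ρ < 1 ∧ ∑ i ∈ Finset.Icc 1 d, ρ ^ i ≤ 1 := by
    have hcont : Continuous fun t : ℝ => ∑ i ∈ Finset.Icc 1 d, t ^ i :=
      continuous_finset_sum _ fun i _ => continuous_pow i
    have hopen : IsOpen {t : ℝ | ∑ i ∈ Finset.Icc 1 d, t ^ i < 1} :=
      isOpen_lt hcont continuous_const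
    obtain ⟨ε, hε, hball⟩ := Metric.isOpen_iff.1 hopen r hlt
    refine ⟨min (r + ε / 2) ((r + 1) / 2), lt_min (by linarith) (by linarith),
      lt_of_le_of_lt (min_le_right _ _) (by linarith), ?_⟩
    have hmem : min (r + ε / 2) ((r + 1) / 2) ∈ Metric.ball r ε := by
      rw [Metric.mem_ball, Real.dist_eq, abs_lt]
      constructor
      · have := lt_min (show r < r + ε / 2 by linarith) (show r < (r + 1) / 2 by linarith)
        linarith
      · have := min_le_left (r + ε / 2) ((r + 1) / 2)
        linarith
    exact le_of_lt (hball hmem)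
  have hρ0 : (0 : ℝ) < ρ := lt_trans hr0 hρr
  set p : ℕ → Bool := fun x => decide (b ≤ x) with hp
  -- the key cardinality bound
  have key : ∀ n : ℕ,
      Nat.card {c : List ℕ // (∀ x ∈ c, 0 < x) ∧ c.sum = n ∧ ¬ CompContains (b :: tB) c} ≤
        ((k + 1) * (n + 1) ^ k) * (((k + 1) * (n + 1) ^ k) *
          Nat.card ((m : Fin (n + 1)) × CompGF.Sm d m)) := by
    intro n
    haveI hT1fin : Finite {l : List ℕ // l.length ≤ k ∧ ∀ x ∈ l, x ≤ n} := (CompGF.card_bounded k n).1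
    set E : {c : List ℕ // (∀ x ∈ c, 0 < x) ∧ c.sum = n ∧ ¬ CompContains (b :: tB) c} →
        {l : List ℕ // l.length ≤ k ∧ ∀ x ∈ l, x ≤ n} ×
        {l : List ℕ // l.length ≤ k ∧ ∀ x ∈ l, x ≤ n} ×
        ((m : Fin (n + 1)) × CompGF.Sm d m) := fun c =>
      (⟨c.val.filter p, by
          have h5 := CompGF.avoid_filter_lt b (b :: tB) c.val hmax c.2.2.2
          rw [← hp] at h5
          simp only [List.length_cons] at h5
          omega,
        fun y hy => by
          have h6 := (List.mem_filter.1 hy).1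
          have h7 := List.le_sum_of_mem h6
          rw [c.2.2.1] at h7
          exact h7⟩,
       ⟨CompGF.bigIdx p c.val, by
          rw [CompGF.bigIdx_length]
          have h5 := CompGF.avoid_filter_lt b (b :: tB) c.val hmax c.2.2.2
          rw [← hp] at h5
          simp only [List.length_cons] at h5
          omega,
        fun y hy => by
          have h6 := CompGF.bigIdx_lt p c.val y hy
          have h7 := List.length_le_sum_of_one_le c.val c.2.1
          have h8 := c.2.2.1
          omega⟩,
       ⟨⟨(c.val.filter (fun y => !p y)).sum, by
          have h5 : (c.val.filter (fun y => !p y)).sum ≤ c.val.sum :=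
            List.Sublist.sum_le_sum List.filter_sublist (fun x _ => Nat.zero_le x)
          rw [c.2.2.1] at h5
          omega⟩,
        ⟨c.val.filter (fun y => !p y),
         fun y hy => c.2.1 y ((List.mem_filter.1 hy).1),
         rfl,
         fun y hy => by
          have h6 := (List.mem_filter.1 hy).2
          simp only [hp, Bool.not_eq_true', decide_eq_false_iff_not, not_le] at h6
          omega⟩⟩) with hE
    have hinj : Function.Injective E := by
      intro c c' h
      have h1 : c.val.filter p = c'.val.filter p := congrArg (fun z => z.1.val) h
      have h2 : CompGF.bigIdx p c.val = CompGF.bigIdx p c'.val :=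
        congrArg (fun z => z.2.1.val) h
      have h3 : c.val.filter (fun y => !p y) = c'.val.filter (fun y => !p y) :=
        congrArg (fun z => z.2.2.2.val) h
      exact Subtype.ext (CompGF.recon p c.val c'.val h1 h3 h2)
    have hle := Nat.card_le_card_of_injective E hinj
    refine le_trans hle ?_
    rw [Nat.card_prod, Nat.card_prod]
    have hc1 := (CompGF.card_bounded k n).2
    exact Nat.mul_le_mul hc1 (Nat.mul_le_mul hc1 le_rfl)
  -- the sigma cardinality bound
  have hsig : ∀ n : ℕ, (Nat.card ((m : Fin (n + 1)) × CompGF.Sm d m) : ℝ) ≤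
      ((n : ℝ) + 1) * (1 / ρ) ^ n := by
    intro n
    letI : ∀ m : Fin (n + 1), Fintype (CompGF.Sm d (m : ℕ)) := fun _ => Fintype.ofFinite _
    rw [Nat.card_eq_fintype_card, Fintype.card_sigma]
    push_cast
    have hone : (1 : ℝ) ≤ 1 / ρ := by
      rw [le_div_iff₀ hρ0]
      linarith
    have hterm : ∀ m : Fin (n + 1), (Fintype.card (CompGF.Sm d (m : ℕ)) : ℝ) ≤ (1 / ρ) ^ n := by
      intro m
      have hb1 := CompGF.Sm_bound d ρ hρ0 hρ1.le hρq (m : ℕ)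
      rw [Nat.card_eq_fintype_card] at hb1
      have h9 : (Fintype.card (CompGF.Sm d (m : ℕ)) : ℝ) ≤ (1 / ρ) ^ (m : ℕ) := by
        rw [div_pow, one_pow, le_div_iff₀ (pow_pos hρ0 _)]
        exact hb1
      refine le_trans h9 (pow_le_pow_right₀ hone ?_)
      omega
    calc (∑ m : Fin (n + 1), (Fintype.card (CompGF.Sm d (m : ℕ)) : ℝ))
        ≤ ∑ _m : Fin (n + 1), (1 / ρ) ^ n := Finset.sum_le_sum (fun m _ => hterm m)
      _ = ((n : ℝ) + 1) * (1 / ρ) ^ n := by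
          rw [Finset.sum_const, Finset.card_univ, Fintype.card_fin, nsmul_eq_mul]
          push_cast
          ring
  set x := r / ρ with hxdef
  have hx0 : 0 < x := div_pos hr0 hρ0
  have hx1 : x < 1 := (div_lt_one hρ0).2 hρr
  have hxn : ‖x‖ < 1 := by rw [Real.norm_eq_abs, abs_of_pos hx0]; exact hx1
  -- summable majorant
  have hs1 : Summable (fun n : ℕ => ((n : ℝ)) ^ (2 * k + 1) * x ^ n) :=
    summable_pow_mul_geometric_of_norm_lt_one _ hxn
  have hs2 : Summable (fun n : ℕ => ((n : ℝ) + 1) ^ (2 * k + 1) * x ^ (n + 1)) := by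
    have h10 := (summable_nat_add_iff 1).2 hs1
    exact h10.congr (fun n => by push_cast; ring)
  have hs3 : Summable (fun n : ℕ => ((n : ℝ) + 1) ^ (2 * k + 1) * x ^ n) := by
    have h11 := hs2.mul_left x⁻¹
    refine h11.congr (fun n => ?_)
    rw [pow_succ]
    field_simp
    ring
  have hs4 : Summable (fun n : ℕ =>
      (((k : ℝ) + 1) ^ 2) * (((n : ℝ) + 1) ^ (2 * k + 1) * x ^ n)) := hs3.mul_left _
  refine Summable.of_nonneg_of_le
    (fun n => mul_nonneg (Nat.cast_nonneg _) (pow_nonneg hr0.le n)) (fun n => ?_) hs4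
  -- the term bound
  have hf : (Nat.card {c : List ℕ // (∀ x ∈ c, 0 < x) ∧ c.sum = n ∧
      ¬ CompContains (b :: tB) c} : ℝ) ≤
      ((k : ℝ) + 1) * ((n : ℝ) + 1) ^ k * (((k : ℝ) + 1) * ((n : ℝ) + 1) ^ k *
        (Nat.card ((m : Fin (n + 1)) × CompGF.Sm d m) : ℝ)) := by
    have h12 := key n
    have h13 : ((((k + 1) * (n + 1) ^ k) * (((k + 1) * (n + 1) ^ k) *
        Nat.card ((m : Fin (n + 1)) × CompGF.Sm d m)) : ℕ) : ℝ) =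
        ((k : ℝ) + 1) * ((n : ℝ) + 1) ^ k * (((k : ℝ) + 1) * ((n : ℝ) + 1) ^ k *
        (Nat.card ((m : Fin (n + 1)) × CompGF.Sm d m) : ℝ)) := by push_cast; ring
    rw [← h13]
    exact_mod_cast h12
  have hA : (0 : ℝ) ≤ ((k : ℝ) + 1) * ((n : ℝ) + 1) ^ k :=
    mul_nonneg (by positivity) (by positivity)
  calc (Nat.card {c : List ℕ // (∀ x ∈ c, 0 < x) ∧ c.sum = n ∧
        ¬ CompContains (b :: tB) c} : ℝ) * r ^ n
      ≤ (((k : ℝ) + 1) * ((n : ℝ) + 1) ^ k * (((k : ℝ) + 1) * ((n : ℝ) + 1) ^ k *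
          (Nat.card ((m : Fin (n + 1)) × CompGF.Sm d m) : ℝ))) * r ^ n :=
        mul_le_mul_of_nonneg_right hf (pow_nonneg hr0.le n)
    _ ≤ (((k : ℝ) + 1) * ((n : ℝ) + 1) ^ k * (((k : ℝ) + 1) * ((n : ℝ) + 1) ^ k *
          (((n : ℝ) + 1) * (1 / ρ) ^ n))) * r ^ n := by
        have h14 := hsig n
        gcongr
    _ = (((k : ℝ) + 1) ^ 2) * (((n : ℝ) + 1) ^ (2 * k + 1) * x ^ n) := by
        have hxx : (1 / ρ) ^ n * r ^ n = x ^ n := by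
          rw [← mul_pow, hxdef]
          congr 1
          field_simp
        have hpp : ((n : ℝ) + 1) ^ k * ((n : ℝ) + 1) ^ k * ((n : ℝ) + 1) =
            ((n : ℝ) + 1) ^ (2 * k + 1) := by
          rw [← pow_add, pow_succ, two_mul]
        rw [← hxx, ← hpp]
        ring
end

section
/- Let a > 2 be an integer and let r_a be the least positive real root of 1 − t − t² − ⋯ − t^{a−1}. Let A be a weakly decreasing list of positive integers (a partition) whose first (greatest) part equals a, and write f_A(n) for the number of compositions of n avoiding A. Then Σ_{n≥0} f_A(n) t^n (interpreted as a sum in [0,∞]) tends to ∞ as t tends to r_a from below. -/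
/-- Lists with positive entries and fixed sum (plus any predicate) form a finite type. -/
lemma finite_comp_subtype (n : ℕ) (P : List ℕ → Prop) :
    Finite {c : List ℕ // (∀ x ∈ c, 0 < x) ∧ c.sum = n ∧ P c} := by
  have : Finite (Composition n) := inferInstance
  apply Finite.of_injective
    (fun c => (⟨c.1, fun hi => c.2.1 _ hi, c.2.2.1⟩ : Composition n))
  intro c d h
  exact Subtype.ext (congrArg Composition.blocks h)

/-- If every part of `c` is `< a` and the first part of `A` is `a`, then `c` avoids `A`. -/
lemma avoid_of_lt (a : ℕ) (A c : List ℕ) (hhead : A.head? = some a)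
    (hc : ∀ x ∈ c, x < a) : ¬ CompContains A c := by
  rintro ⟨s, hsub, hfor⟩
  cases A with
  | nil => simp at hhead
  | cons a' A' =>
    simp only [List.head?] at hhead
    obtain rfl : a' = a := by injection hhead
    obtain ⟨b, s', hab, -, rfl⟩ := List.forall₂_cons_left_iff.mp hfor
    have hb : b ∈ c := hsub.subset List.mem_cons_self
    exact absurd hab (by have := hc b hb; omega)

/-- If `a > 2`, `r_a` is the least positive root of `1 − t − ⋯ − t^{a−1}`, and `A` is a
partition whose greatest (first) part equals `a`, then the generating function of
compositions avoiding `A` tends to `∞` as `t → r_a⁻`. -/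
theorem comp_gf_diverges (a : ℕ) (ha : 2 < a) (r : ℝ) (hr0 : 0 < r)
    (hroot : 1 - ∑ i ∈ Finset.Icc 1 (a - 1), r ^ i = 0)
    (hleast : ∀ s : ℝ, 0 < s → 1 - ∑ i ∈ Finset.Icc 1 (a - 1), s ^ i = 0 → r ≤ s)
    (A : List ℕ) (hAdec : A.Pairwise (· ≥ ·)) (hApos : ∀ x ∈ A, 0 < x)
    (hhead : A.head? = some a) :
    Filter.Tendsto
      (fun t : ℝ => ∑' n : ℕ,
        (Nat.card {c : List ℕ // (∀ x ∈ c, 0 < x) ∧ c.sum = n ∧ ¬ CompContains A c} : ENNReal)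
          * ENNReal.ofReal t ^ n)
      (nhdsWithin r (Set.Iio r)) (nhds ⊤) := by
  classical
  set I : Finset ℕ := Finset.Icc 1 (a - 1) with hI
  have hsum_r : ∑ i ∈ I, r ^ i = 1 := by linarith
  rw [ENNReal.tendsto_nhds_top_iff_nat]
  intro m
  set K : ℕ := m + 1 with hK
  -- the real polynomial
  set g : ℝ → ℝ := fun t => ∑ k ∈ Finset.range (K + 1), (∑ i ∈ I, t ^ i) ^ k with hg
  have hgr : g r = (K : ℝ) + 1 := by
    simp [hg, hsum_r]
  have hcontg : Continuous g := by fun_prop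
  have hev1 : ∀ᶠ t in nhdsWithin r (Set.Iio r), (m : ℝ) < g t := by
    have h1 : Filter.Tendsto g (nhdsWithin r (Set.Iio r)) (nhds (g r)) :=
      (hcontg.continuousAt).continuousWithinAt
    have h2 : ∀ᶠ y in nhds (g r), (m : ℝ) < y := by
      apply eventually_gt_nhds
      rw [hgr]; push_cast [hK]; linarith
    exact h1.eventually h2
  have hev0 : ∀ᶠ t in nhdsWithin r (Set.Iio r), 0 < t :=
    (eventually_gt_nhds hr0).filter_mono nhdsWithin_le_nhds
  filter_upwards [hev1, hev0] with t hgt ht0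
  set x : ENNReal := ENNReal.ofReal t with hx
  -- the ENNReal version of g t
  have hnn : (0:ℝ) ≤ ∑ i ∈ I, t ^ i :=
    Finset.sum_nonneg fun i _ => pow_nonneg ht0.le i
  have hofReal : ENNReal.ofReal (g t)
      = ∑ k ∈ Finset.range (K + 1), (∑ i ∈ I, x ^ i) ^ k := by
    rw [hg]
    rw [ENNReal.ofReal_sum_of_nonneg (fun k _ => pow_nonneg hnn k)]
    refine Finset.sum_congr rfl fun k _ => ?_
    rw [ENNReal.ofReal_pow hnn,
      ENNReal.ofReal_sum_of_nonneg (fun i _ => pow_nonneg ht0.le i)]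
    refine congrArg (· ^ k) (Finset.sum_congr rfl fun i _ => ?_)
    rw [ENNReal.ofReal_pow ht0.le]
  -- expand each power as a sum over tuples
  have hpow : ∀ k : ℕ, (∑ i ∈ I, x ^ i) ^ k
      = ∑ p ∈ Fintype.piFinset (fun _ : Fin k => I), x ^ (∑ j, p j) := by
    intro k
    have : (∑ i ∈ I, x ^ i) ^ k = ∏ _j : Fin k, (∑ i ∈ I, x ^ i) := by
      rw [Finset.prod_const, Finset.card_univ, Fintype.card_fin]
    rw [this, Finset.prod_univ_sum]
    exact Finset.sum_congr rfl fun p _ =>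
      Finset.prod_pow_eq_pow_sum Finset.univ p x
  -- sets of lists
  set LS : ℕ → Finset (List ℕ) :=
    fun k => (Fintype.piFinset (fun _ : Fin k => I)).image List.ofFn with hLS
  have hLSsum : ∀ k, ∑ l ∈ LS k, x ^ l.sum
      = ∑ p ∈ Fintype.piFinset (fun _ : Fin k => I), x ^ (∑ j, p j) := by
    intro k
    rw [hLS]
    rw [Finset.sum_image (fun p _ q _ h => List.ofFn_injective h)]
    exact Finset.sum_congr rfl fun p _ => by rw [List.sum_ofFn]
  have hLSlen : ∀ k, ∀ l ∈ LS k, l.length = k := by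
    intro k l hl
    rw [hLS] at hl
    obtain ⟨p, -, rfl⟩ := Finset.mem_image.mp hl
    simp
  set LSK : Finset (List ℕ) := (Finset.range (K + 1)).biUnion LS with hLSK
  have hdisj : ∀ k₁ ∈ Finset.range (K+1), ∀ k₂ ∈ Finset.range (K+1), k₁ ≠ k₂ →
      Disjoint (LS k₁) (LS k₂) := by
    intro k₁ _ k₂ _ hne
    rw [Finset.disjoint_left]
    intro l h1 h2
    exact hne ((hLSlen k₁ l h1).symm.trans (hLSlen k₂ l h2))
  have hbi : ∑ l ∈ LSK, x ^ l.sum = ∑ k ∈ Finset.range (K + 1), ∑ l ∈ LS k, x ^ l.sum :=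
    Finset.sum_biUnion hdisj
  -- properties of members of LSK
  have hmem : ∀ l ∈ LSK, (∀ y ∈ l, 0 < y ∧ y < a) ∧ l.sum ≤ K * (a - 1) := by
    intro l hl
    rw [hLSK, Finset.mem_biUnion] at hl
    obtain ⟨k, hk, hlk⟩ := hl
    rw [hLS, Finset.mem_image] at hlk
    obtain ⟨p, hp, rfl⟩ := hlk
    rw [Fintype.mem_piFinset] at hp
    constructor
    · intro y hy
      rw [List.mem_ofFn] at hy
      obtain ⟨j, rfl⟩ := hy
      have := hp j
      rw [hI, Finset.mem_Icc] at this
      omega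
    · rw [List.sum_ofFn]
      calc ∑ j, p j ≤ ∑ _j : Fin k, (a - 1) := by
            refine Finset.sum_le_sum fun j _ => ?_
            have := hp j; rw [hI, Finset.mem_Icc] at this; exact this.2
        _ = k * (a - 1) := by simp [mul_comm]
        _ ≤ K * (a - 1) := by
            rw [Finset.mem_range] at hk
            exact Nat.mul_le_mul_right _ (by omega)
  -- group by sum
  set N : ℕ := K * (a - 1) with hN
  have hmaps : ∀ l ∈ LSK, l.sum ∈ Finset.range (N + 1) := by
    intro l hl
    rw [Finset.mem_range]
    exact Nat.lt_succ_of_le (hmem l hl).2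
  have hfiber : ∑ n ∈ Finset.range (N + 1),
      ∑ l ∈ LSK.filter (fun l => l.sum = n), x ^ l.sum = ∑ l ∈ LSK, x ^ l.sum :=
    Finset.sum_fiberwise_of_maps_to hmaps _
  -- each fiber is card * x^n
  have hfibval : ∀ n, ∑ l ∈ LSK.filter (fun l => l.sum = n), x ^ l.sum
      = ((LSK.filter (fun l => l.sum = n)).card : ENNReal) * x ^ n := by
    intro n
    calc ∑ l ∈ LSK.filter (fun l => l.sum = n), x ^ l.sum
        = ∑ _l ∈ LSK.filter (fun l => l.sum = n), x ^ n :=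
          Finset.sum_congr rfl fun l hl => by
            rw [(Finset.mem_filter.mp hl).2]
      _ = ((LSK.filter (fun l => l.sum = n)).card : ENNReal) * x ^ n := by
          rw [Finset.sum_const, nsmul_eq_mul]
  -- fiber cards bounded by the avoidance count
  have hcard : ∀ n : ℕ, ((LSK.filter (fun l => l.sum = n)).card : ℕ)
      ≤ Nat.card {c : List ℕ // (∀ y ∈ c, 0 < y) ∧ c.sum = n ∧ ¬ CompContains A c} := by
    intro n
    have : Finite {c : List ℕ // (∀ y ∈ c, 0 < y) ∧ c.sum = n ∧ ¬ CompContains A c} :=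
      finite_comp_subtype n _
    rw [← Fintype.card_coe (LSK.filter (fun l => l.sum = n)), ← Nat.card_eq_fintype_card]
    refine Nat.card_le_card_of_injective
      (fun l => ⟨l.1, ?_, ?_, ?_⟩) ?_
    · intro y hy
      exact ((hmem l.1 (Finset.mem_filter.mp l.2).1).1 y hy).1
    · exact (Finset.mem_filter.mp l.2).2
    · refine avoid_of_lt a A l.1 hhead fun y hy => ?_
      exact ((hmem l.1 (Finset.mem_filter.mp l.2).1).1 y hy).2
    · intro l₁ l₂ h
      simp only [Subtype.mk.injEq] at h
      exact Subtype.ext h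
  -- put everything together
  have key : ENNReal.ofReal (g t)
      ≤ ∑' n : ℕ,
        (Nat.card {c : List ℕ // (∀ y ∈ c, 0 < y) ∧ c.sum = n ∧ ¬ CompContains A c} : ENNReal)
          * x ^ n := by
    rw [hofReal]
    calc ∑ k ∈ Finset.range (K + 1), (∑ i ∈ I, x ^ i) ^ k
        = ∑ l ∈ LSK, x ^ l.sum := by
          rw [hbi]
          exact Finset.sum_congr rfl fun k _ => by rw [hpow, hLSsum]
      _ = ∑ n ∈ Finset.range (N + 1),
            ((LSK.filter (fun l => l.sum = n)).card : ENNReal) * x ^ n := by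
          rw [← hfiber]
          exact Finset.sum_congr rfl fun n _ => hfibval n
      _ ≤ ∑ n ∈ Finset.range (N + 1),
            (Nat.card {c : List ℕ // (∀ y ∈ c, 0 < y) ∧ c.sum = n ∧ ¬ CompContains A c} : ENNReal)
              * x ^ n := by
          refine Finset.sum_le_sum fun n _ => ?_
          exact mul_le_mul_left (Nat.cast_le.mpr (hcard n)) _
      _ ≤ _ := ENNReal.sum_le_tsum _
  refine lt_of_lt_of_le ?_ key
  rw [← ENNReal.ofReal_natCast m]
  rw [ENNReal.ofReal_lt_ofReal_iff (lt_of_le_of_lt (Nat.cast_nonneg m) hgt)]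
  exact hgt
end

section
/- Let ∼ be the smallest equivalence relation on compositions such that for all (possibly empty) lists P, Q of positive integers, all positive integers a, b: P++[a,b]++Q ∼ P++[b,a]++Q and P++[1,1]++Q ∼ P++[2]++Q. Then for all compositions A and B: the number of compositions of n avoiding A equals the number of compositions of n avoiding B for every n, if and only if A ∼ B. (That is, ∼ is sound and complete for Wilf-equivalence on the class of compositions, equivalently on the layered permutation class Av(312,231).) -/
/-- One rewriting step of the equivalence `∼` on compositions:
`P ++ [a,b] ++ Q ∼ P ++ [b,a] ++ Q` and `P ++ [1,1] ++ Q ∼ P ++ [2] ++ Q`. -/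
inductive CompStep : List ℕ → List ℕ → Prop
  | swap (P Q : List ℕ) (a b : ℕ) (hP : ∀ x ∈ P, 0 < x) (hQ : ∀ x ∈ Q, 0 < x)
      (ha : 0 < a) (hb : 0 < b) : CompStep (P ++ [a, b] ++ Q) (P ++ [b, a] ++ Q)
  | merge (P Q : List ℕ) (hP : ∀ x ∈ P, 0 < x) (hQ : ∀ x ∈ Q, 0 < x) :
      CompStep (P ++ [1, 1] ++ Q) (P ++ [2] ++ Q)

namespace CW
open List
open scoped Classical

noncomputable def comps : ℕ → Finset (List ℕ)
  | 0 => {([] : List ℕ)}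
  | (n+1) => (Finset.range (n+1)).attach.biUnion fun k =>
      (comps k.1).image (fun c => (n+1-k.1) :: c)
  decreasing_by exact Finset.mem_range.mp k.2

theorem mem_comps : ∀ (n : ℕ) (c : List ℕ), c ∈ comps n ↔ ((∀ x ∈ c, 0 < x) ∧ c.sum = n)
  | 0, c => by
      simp only [comps, Finset.mem_singleton]
      constructor
      · rintro rfl; exact ⟨by simp, rfl⟩
      · rintro ⟨h1, h2⟩
        cases c with
        | nil => rfl
        | cons x t =>
          exfalso; have := h1 x (by simp); simp only [List.sum_cons] at h2; omega
  | (n+1), c => by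
      simp only [comps, Finset.mem_biUnion, Finset.mem_image, Finset.mem_attach, true_and,
        Subtype.exists, Finset.mem_range]
      constructor
      · rintro ⟨k, hk, c', hc', rfl⟩
        have h := (mem_comps k c').1 hc'
        constructor
        · intro x hx
          rcases List.mem_cons.1 hx with rfl | hx
          · omega
          · exact h.1 x hx
        · simp [h.2]; omega
      · rintro ⟨h1, h2⟩
        cases c with
        | nil => simp at h2
        | cons x t =>
          have hx := h1 x (by simp)
          simp only [List.sum_cons] at h2
          refine ⟨t.sum, by omega, t, (mem_comps _ t).2 ⟨fun y hy => h1 y (by simp [hy]), rfl⟩, ?_⟩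
          congr 1
          omega

noncomputable def cnt (p : List ℕ → Prop) (n : ℕ) : ℕ :=
  ((comps n).filter p).card

lemma mem_cntset {p : List ℕ → Prop} {n : ℕ} {c : List ℕ} :
    c ∈ (comps n).filter p ↔ ((∀ x ∈ c, 0 < x) ∧ c.sum = n ∧ p c) := by
  rw [Finset.mem_filter, mem_comps]
  tauto

noncomputable def gfP (p : List ℕ → Prop) : PowerSeries ℚ :=
  PowerSeries.mk fun n => (cnt p n : ℚ)

lemma coeff_gfP (p : List ℕ → Prop) (n : ℕ) :
    (PowerSeries.coeff n) (gfP p) = (cnt p n : ℚ) := PowerSeries.coeff_mk _ _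

lemma cnt_congr {p q : List ℕ → Prop} (h : ∀ c, (∀ x ∈ c, 0 < x) → (p c ↔ q c)) (n : ℕ) :
    cnt p n = cnt q n := by
  unfold cnt
  congr 1
  ext c
  rw [mem_cntset, mem_cntset]
  constructor
  · rintro ⟨h1, h2, h3⟩; exact ⟨h1, h2, (h c h1).1 h3⟩
  · rintro ⟨h1, h2, h3⟩; exact ⟨h1, h2, (h c h1).2 h3⟩

lemma gfP_congr {p q : List ℕ → Prop} (h : ∀ c, (∀ x ∈ c, 0 < x) → (p c ↔ q c)) :
    gfP p = gfP q := by
  ext n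
  rw [coeff_gfP, coeff_gfP, cnt_congr h]

/-- Key multiplication lemma: unique decompositions give products of genfuns. -/
lemma cnt_decomp (p p1 p2 : List ℕ → Prop)
    (hiff : ∀ c, (∀ x ∈ c, 0 < x) → (p c ↔ ∃ u v, c = u ++ v ∧ p1 u ∧ p2 v))
    (huniq : ∀ u v u' v', p1 u → p2 v → p1 u' → p2 v' → u ++ v = u' ++ v' → u = u')
    (n : ℕ) :
    cnt p n = ∑ ij ∈ Finset.HasAntidiagonal.antidiagonal n, cnt p1 ij.1 * cnt p2 ij.2 := by
  have key : (comps n).filter p =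
      (Finset.HasAntidiagonal.antidiagonal n).biUnion
        (fun ij => (((comps ij.1).filter p1) ×ˢ ((comps ij.2).filter p2)).image
            fun uv => uv.1 ++ uv.2) := by
    ext c
    simp only [Finset.mem_biUnion, Finset.mem_image, Finset.mem_product, Finset.HasAntidiagonal.mem_antidiagonal,
      Prod.exists]
    rw [mem_cntset]
    constructor
    · rintro ⟨hpos, hsum, hp⟩
      obtain ⟨u, v, rfl, h1, h2⟩ := (hiff _ hpos).1 hp
      refine ⟨u.sum, v.sum, by simpa using hsum, ⟨u, v, ⟨?_, ?_⟩, rfl⟩⟩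
      · rw [mem_cntset]
        exact ⟨fun x hx => hpos x (by simp [hx]), rfl, h1⟩
      · rw [mem_cntset]
        exact ⟨fun x hx => hpos x (by simp [hx]), rfl, h2⟩
    · rintro ⟨i, j, hij, u, v, ⟨hu, hv⟩, rfl⟩
      rw [mem_cntset] at hu hv
      have hpos : ∀ x ∈ u ++ v, 0 < x := by
        intro x hx; rcases List.mem_append.1 hx with h | h
        · exact hu.1 x h
        · exact hv.1 x h
      refine ⟨hpos, by simp [hu.2.1, hv.2.1, hij], ?_⟩
      exact (hiff _ hpos).2 ⟨u, v, rfl, hu.2.2, hv.2.2⟩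
  rw [cnt, key, Finset.card_biUnion]
  · refine Finset.sum_congr rfl fun ij _ => ?_
    rw [Finset.card_image_of_injOn, Finset.card_product]
    · rfl
    rintro ⟨u, v⟩ huv ⟨u', v'⟩ huv' he
    simp only [Finset.mem_coe, Finset.mem_product] at huv huv'
    obtain ⟨hu, hv⟩ := huv
    obtain ⟨hu', hv'⟩ := huv'
    rw [mem_cntset] at hu hv hu' hv'
    simp only at he
    have h1 := huniq u v u' v' hu.2.2 hv.2.2 hu'.2.2 hv'.2.2 he
    subst h1
    have := List.append_cancel_left he
    simp [this]
  · rintro ⟨i, j⟩ hij ⟨i', j'⟩ hij' hne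
    simp only [Finset.mem_coe, Finset.HasAntidiagonal.mem_antidiagonal] at hij hij'
    rw [Function.onFun, Finset.disjoint_left]
    rintro c hc hc'
    simp only [Finset.mem_image, Finset.mem_product, Prod.exists] at hc hc'
    obtain ⟨u, v, ⟨hu, hv⟩, rfl⟩ := hc
    obtain ⟨u', v', ⟨hu', hv'⟩, he⟩ := hc'
    rw [mem_cntset] at hu hv hu' hv'
    have hee := he.symm
    have h1 := huniq u v u' v' hu.2.2 hv.2.2 hu'.2.2 hv'.2.2 hee
    subst h1
    have h2 := List.append_cancel_left hee
    subst h2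
    apply hne
    have e1 : i = i' := by rw [← hu.2.1, ← hu'.2.1]
    have e2 : j = j' := by omega
    simp [e1, e2]

lemma gfP_mul (p p1 p2 : List ℕ → Prop)
    (hiff : ∀ c, (∀ x ∈ c, 0 < x) → (p c ↔ ∃ u v, c = u ++ v ∧ p1 u ∧ p2 v))
    (huniq : ∀ u v u' v', p1 u → p2 v → p1 u' → p2 v' → u ++ v = u' ++ v' → u = u') :
    gfP p = gfP p1 * gfP p2 := by
  ext n
  rw [PowerSeries.coeff_mul, coeff_gfP, cnt_decomp p p1 p2 hiff huniq]
  push_cast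
  exact Finset.sum_congr rfl fun ij _ => by rw [coeff_gfP, coeff_gfP]

end CW
namespace CW
open List
open scoped Classical

def small (a : ℕ) (c : List ℕ) : Prop := ∀ y ∈ c, y < a
def singGe (a : ℕ) (c : List ℕ) : Prop := ∃ x, c = [x] ∧ a ≤ x
def singLt (a : ℕ) (c : List ℕ) : Prop := ∃ x, c = [x] ∧ 1 ≤ x ∧ x < a

lemma sub_aux (a : ℕ) : ∀ (c : List ℕ) (x : ℕ) (s' : List ℕ), (x::s') <+ c → a ≤ x →
    ∃ u y v, c = u ++ y::v ∧ (∀ z ∈ u, z < a) ∧ a ≤ y ∧ s' <+ v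
  | [], x, s', h, _ => by simp at h
  | (y::c'), x, s', h, hax => by
      by_cases hy : a ≤ y
      · refine ⟨[], y, c', rfl, by simp, hy, ?_⟩
        cases h with
        | cons _ h' => exact (List.sublist_cons_self x s').trans h'
        | cons_cons _ h' => exact h'
      · cases h with
        | cons _ h' =>
            obtain ⟨u, y0, v, rfl, hu, hy0, hs⟩ := sub_aux a c' x s' h' hax
            refine ⟨y::u, y0, v, rfl, ?_, hy0, hs⟩
            intro z hz
            rcases List.mem_cons.1 hz with rfl | hz
            · omega
            · exact hu z hz
        | cons_cons _ h' => omega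

lemma contains_cons_iff (a : ℕ) (A : List ℕ) (c : List ℕ) :
    CompContains (a::A) c ↔ ∃ u v, c = u ++ v ∧ small a u ∧
      (∃ x w, v = x :: w ∧ a ≤ x ∧ CompContains A w) := by
  constructor
  · rintro ⟨s, hs, hf⟩
    obtain ⟨x, s', hax, hf', rfl⟩ := List.forall₂_cons_left_iff.1 hf
    obtain ⟨u, y, v, rfl, hu, hy, hs'⟩ := sub_aux a c x s' hs hax
    exact ⟨u, y::v, rfl, hu, y, v, rfl, hy, ⟨s', hs', hf'⟩⟩
  · rintro ⟨u, v, rfl, hu, x, w, rfl, hax, s', hsub, hf⟩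
    exact ⟨x::s', (hsub.cons₂ x).trans (List.sublist_append_right u _),
      List.Forall₂.cons hax hf⟩

lemma uniq_small_ge (a : ℕ) (p2 : List ℕ → Prop)
    (h2 : ∀ v, p2 v → ∃ x w, v = x :: w ∧ a ≤ x) :
    ∀ u v u' v', small a u → p2 v → small a u' → p2 v' → u ++ v = u' ++ v' → u = u' := by
  intro u v u' v' hu hv hu' hv' he
  obtain ⟨x, w, rfl, hax⟩ := h2 v hv
  obtain ⟨x', w', rfl, hax'⟩ := h2 v' hv'
  rcases List.append_eq_append_iff.1 he with ⟨t, hu2, hv2⟩ | ⟨t, hu2, hv2⟩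
  · cases t with
    | nil => simp [hu2]
    | cons z t' =>
      exfalso
      have hz := hu' z (by simp [hu2])
      have hxz : x = z := by
        have : x :: w = z :: (t' ++ x' :: w') := by simpa using hv2
        exact (List.cons.injEq _ _ _ _ ▸ this).1
      omega
  · cases t with
    | nil => simp [hu2]
    | cons z t' =>
      exfalso
      have hz := hu z (by simp [hu2])
      have hxz : x' = z := by
        have : x' :: w' = z :: (t' ++ x :: w) := by simpa using hv2
        exact (List.cons.injEq _ _ _ _ ▸ this).1
      omega

lemma cnt_congr' {p q : List ℕ → Prop} (n : ℕ)
    (h : ∀ c, (∀ x ∈ c, 0 < x) → c.sum = n → (p c ↔ q c)) :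
    cnt p n = cnt q n := by
  unfold cnt
  congr 1
  ext c
  rw [mem_cntset, mem_cntset]
  constructor
  · rintro ⟨h1, h2, h3⟩; exact ⟨h1, h2, (h c h1 h2).1 h3⟩
  · rintro ⟨h1, h2, h3⟩; exact ⟨h1, h2, (h c h1 h2).2 h3⟩

lemma sum_eq_length {c : List ℕ} (h : ∀ x ∈ c, x = 1) : c.sum = c.length := by
  induction c with
  | nil => rfl
  | cons y t ih =>
    simp only [List.sum_cons, List.length_cons, h y (by simp)]
    rw [ih fun x hx => h x (by simp [hx])]
    omega

lemma cnt_small_two (n : ℕ) : cnt (small 2) n = 1 := by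
  unfold cnt
  have : (comps n).filter (small 2) = {List.replicate n 1} := by
    ext c
    rw [mem_cntset, Finset.mem_singleton]
    constructor
    · rintro ⟨h1, h2, h3⟩
      have hall : ∀ x ∈ c, x = 1 := fun x hx => by
        have := h1 x hx; have := h3 x hx; omega
      rw [List.eq_replicate_iff]
      refine ⟨?_, hall⟩
      rw [← sum_eq_length hall, h2]
    · rintro rfl
      refine ⟨fun x hx => ?_, ?_, fun x hx => ?_⟩
      · rw [List.eq_of_mem_replicate hx]; omega
      · simp [List.sum_replicate]
      · rw [List.eq_of_mem_replicate hx]; omega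
  rw [this, Finset.card_singleton]

lemma comps_zero_filter {p : List ℕ → Prop} (hp : p []) :
    (comps 0).filter p = {([] : List ℕ)} := by
  ext c
  rw [mem_cntset, Finset.mem_singleton]
  constructor
  · rintro ⟨h1, h2, _⟩
    cases c with
    | nil => rfl
    | cons x t => exfalso; have := h1 x (by simp); simp at h2; omega
  · rintro rfl
    exact ⟨by simp, rfl, hp⟩

lemma gf_small_one : gfP (small 1) = 1 := by
  ext n
  rw [coeff_gfP, PowerSeries.coeff_one]
  have : cnt (small 1) n = if n = 0 then 1 else 0 := by
    unfold cnt
    split_ifs with h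
    · subst h; rw [comps_zero_filter (by intro y hy; simp at hy), Finset.card_singleton]
    · rw [Finset.card_eq_zero]
      ext c
      simp only [Finset.notMem_empty, iff_false]
      rw [mem_cntset]
      rintro ⟨h1, h2, h3⟩
      cases c with
      | nil => exact h (by simpa using h2.symm)
      | cons x t =>
        have := h1 x (by simp)
        have := h3 x (by simp)
        omega
  rw [this]
  split_ifs <;> simp

lemma cnt_singGe (a : ℕ) (ha : 0 < a) (n : ℕ) :
    cnt (singGe a) n = if a ≤ n then 1 else 0 := by
  unfold cnt
  split_ifs with h
  · have : (comps n).filter (singGe a) = {[n]} := by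
      ext c
      rw [mem_cntset, Finset.mem_singleton]
      constructor
      · rintro ⟨h1, h2, x, rfl, hax⟩
        simp at h2
        subst h2; rfl
      · rintro rfl
        exact ⟨fun x hx => by simp at hx; omega, by simp, n, rfl, h⟩
    rw [this, Finset.card_singleton]
  · rw [Finset.card_eq_zero]
    ext c
    simp only [Finset.notMem_empty, iff_false]
    rw [mem_cntset]
    rintro ⟨h1, h2, x, rfl, hax⟩
    simp at h2
    omega

lemma cnt_singLt (a : ℕ) (n : ℕ) :
    cnt (singLt a) n = if (1 ≤ n ∧ n < a) then 1 else 0 := by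
  unfold cnt
  split_ifs with h
  · have : (comps n).filter (singLt a) = {[n]} := by
      ext c
      rw [mem_cntset, Finset.mem_singleton]
      constructor
      · rintro ⟨h1, h2, x, rfl, hx1, hxa⟩
        simp at h2
        subst h2; rfl
      · rintro rfl
        exact ⟨fun x hx => by simp at hx; omega, by simp, n, rfl, h.1, h.2⟩
    rw [this, Finset.card_singleton]
  · rw [Finset.card_eq_zero]
    ext c
    simp only [Finset.notMem_empty, iff_false]
    rw [mem_cntset]
    rintro ⟨h1, h2, x, rfl, hx1, hxa⟩
    simp at h2
    omega

noncomputable def D : PowerSeries ℚ := gfP (small 2)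

lemma coeff_D (n : ℕ) : (PowerSeries.coeff n) D = 1 := by
  rw [D, coeff_gfP, cnt_small_two]; norm_num

lemma gf_singGe (a : ℕ) (ha : 0 < a) :
    gfP (singGe a) = (PowerSeries.X : PowerSeries ℚ) ^ a * D := by
  ext n
  rw [coeff_gfP, cnt_singGe a ha, PowerSeries.coeff_mul]
  have : ∀ p ∈ Finset.HasAntidiagonal.antidiagonal n,
      (PowerSeries.coeff p.1) (PowerSeries.X ^ a) * (PowerSeries.coeff p.2) D
        = if p.1 = a then 1 else 0 := by
    intro p _
    rw [PowerSeries.coeff_X_pow, coeff_D]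
    split_ifs <;> ring
  rw [Finset.sum_congr rfl this]
  rcases le_or_gt a n with h | h
  · rw [Finset.sum_eq_single ((a, n - a) : ℕ × ℕ)]
    · simp [h]
    · rintro ⟨i, j⟩ hij hne
      simp only [Finset.HasAntidiagonal.mem_antidiagonal] at hij
      have : i ≠ a := fun he => hne (by simp [he]; omega)
      simp [this]
    · intro hmem
      exfalso
      exact hmem (by simp [Finset.HasAntidiagonal.mem_antidiagonal]; omega)
  · rw [Finset.sum_eq_zero]
    · simp; omega
    · rintro ⟨i, j⟩ hij
      simp only [Finset.HasAntidiagonal.mem_antidiagonal] at hij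
      have : i ≠ a := by omega
      simp [this]

end CW
namespace CW
open List
open scoped Classical

lemma gf_qrel (a : ℕ) : gfP (small a) * (1 - gfP (singLt a)) = 1 := by
  have h1 : gfP (fun c => c ≠ [] ∧ small a c) = gfP (singLt a) * gfP (small a) := by
    apply gfP_mul
    · intro c hpos
      constructor
      · rintro ⟨hne, hsm⟩
        cases c with
        | nil => exact absurd rfl hne
        | cons x t =>
          refine ⟨[x], t, rfl, ⟨x, rfl, hpos x (by simp), hsm x (by simp)⟩, ?_⟩
          intro y hy; exact hsm y (by simp [hy])
      · rintro ⟨u, v, rfl, ⟨x, rfl, hx1, hxa⟩, hv⟩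
        refine ⟨by simp, ?_⟩
        intro y hy
        rcases List.mem_cons.1 (by simpa using hy) with rfl | hy'
        · exact hxa
        · exact hv y hy'
    · rintro u v u' v' ⟨x, rfl, _, _⟩ _ ⟨x', rfl, _, _⟩ _ he
      simp only [List.cons_append, List.nil_append, List.cons.injEq] at he
      simp [he.1]
  have h2 : gfP (fun c => c ≠ [] ∧ small a c) = gfP (small a) - 1 := by
    ext n
    rw [coeff_gfP, map_sub, coeff_gfP, PowerSeries.coeff_one]
    rcases Nat.eq_zero_or_pos n with rfl | hn
    · have e1 : cnt (fun c => c ≠ [] ∧ small a c) 0 = 0 := by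
        unfold cnt
        rw [Finset.card_eq_zero]
        ext c
        simp only [Finset.notMem_empty, iff_false]
        rw [mem_cntset]
        rintro ⟨h1, h2, hne, _⟩
        cases c with
        | nil => exact hne rfl
        | cons x t => have := h1 x (by simp); simp at h2; omega
      have e2 : cnt (small a) 0 = 1 := by
        unfold cnt
        rw [comps_zero_filter (by intro y hy; simp at hy), Finset.card_singleton]
      rw [e1, e2]
      norm_num
    · have e : cnt (fun c => c ≠ [] ∧ small a c) n = cnt (small a) n := by
        apply cnt_congr'
        intro c hpos hsum
        have hne : c ≠ [] := by
          rintro rfl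
          simp at hsum
          omega
        tauto
      rw [e]
      have : ¬ n = 0 := by omega
      simp [this]
  calc gfP (small a) * (1 - gfP (singLt a))
      = gfP (small a) - gfP (singLt a) * gfP (small a) := by ring
    _ = gfP (small a) - (gfP (small a) - 1) := by rw [← h1, h2]
    _ = 1 := by ring

noncomputable def up (a : ℕ) : Polynomial ℚ :=
  1 - ∑ i ∈ Finset.Ico 1 a, Polynomial.X ^ i

lemma coe_up (a : ℕ) :
    ((up a : Polynomial ℚ) : PowerSeries ℚ) = 1 - gfP (singLt a) := by
  have hs : gfP (singLt a) =
      ((∑ i ∈ Finset.Ico 1 a, Polynomial.X ^ i : Polynomial ℚ) : PowerSeries ℚ) := by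
    ext n
    rw [coeff_gfP, cnt_singLt, Polynomial.coeff_coe, Polynomial.finset_sum_coeff]
    have : ∀ i ∈ Finset.Ico 1 a, ((Polynomial.X : Polynomial ℚ) ^ i).coeff n
        = if n = i then 1 else 0 := fun i _ => by rw [Polynomial.coeff_X_pow]
    rw [Finset.sum_congr rfl this, Finset.sum_ite_eq (Finset.Ico 1 a) n (fun _ => (1:ℚ))]
    simp [Finset.mem_Ico]
  rw [up, Polynomial.coe_sub, Polynomial.coe_one, hs]

lemma gf_small_up (a : ℕ) :
    gfP (small a) * ((up a : Polynomial ℚ) : PowerSeries ℚ) = 1 := by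
  rw [coe_up]; exact gf_qrel a

noncomputable def Hgf (a : ℕ) : PowerSeries ℚ := gfP (small a) * gfP (singGe a)
noncomputable def Tot : PowerSeries ℚ := gfP (fun _ => True)

lemma gf_contains_nil : gfP (CompContains []) = Tot :=
  gfP_congr fun c _ => ⟨fun _ => trivial, fun _ => ⟨[], List.nil_sublist c, List.Forall₂.nil⟩⟩

lemma gf_contains (A : List ℕ) :
    gfP (CompContains A) = (A.map Hgf).prod * Tot := by
  induction A with
  | nil => simp [gf_contains_nil]
  | cons a A ih =>
    have e1 : gfP (CompContains (a::A)) =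
        gfP (small a) * gfP (fun v => ∃ x w, v = x :: w ∧ a ≤ x ∧ CompContains A w) := by
      apply gfP_mul
      · intro c _
        exact contains_cons_iff a A c
      · exact uniq_small_ge a _ fun v ⟨x, w, hv, hax, _⟩ => ⟨x, w, hv, hax⟩
    have e2 : gfP (fun v => ∃ x w, v = x :: w ∧ a ≤ x ∧ CompContains A w) =
        gfP (singGe a) * gfP (CompContains A) := by
      apply gfP_mul
      · intro c _
        constructor
        · rintro ⟨x, w, rfl, hax, h⟩
          exact ⟨[x], w, rfl, ⟨x, rfl, hax⟩, h⟩
        · rintro ⟨u, v, rfl, ⟨x, rfl, hax⟩, h⟩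
          exact ⟨x, v, rfl, hax, h⟩
      · rintro u v u' v' ⟨x, rfl, _⟩ _ ⟨x', rfl, _⟩ _ he
        simp only [List.cons_append, List.nil_append, List.cons.injEq] at he
        simp [he.1]
    rw [e1, e2, ih]
    simp only [List.map_cons, List.prod_cons, Hgf]
    ring

lemma Tot_ne_zero : Tot ≠ 0 := by
  intro h
  have : (PowerSeries.coeff 0) Tot = 0 := by rw [h]; simp
  rw [Tot, coeff_gfP] at this
  have e : cnt (fun _ => True) 0 = 1 := by
    unfold cnt
    rw [comps_zero_filter trivial, Finset.card_singleton]
  rw [e] at this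
  norm_num at this

lemma Hgf_merge : Hgf 1 * Hgf 1 = Hgf 2 := by
  unfold Hgf
  rw [gf_small_one, gf_singGe 1 (by norm_num), gf_singGe 2 (by norm_num)]
  show (1 * (PowerSeries.X ^ 1 * D)) * (1 * (PowerSeries.X ^ 1 * D)) = gfP (small 2) * (PowerSeries.X ^ 2 * D)
  rw [show gfP (small 2) = D from rfl]
  ring

lemma cnt_not_contains (p : List ℕ → Prop) (n : ℕ) :
    cnt p n + cnt (fun c => ¬ p c) n = (comps n).card := by
  unfold cnt
  have h := Finset.card_filter_add_card_filter_not (s := comps n) p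
  convert h using 3
  apply Finset.filter_congr_decidable

end CW
namespace CW
open List
open scoped Classical

lemma prodH_step {A B : List ℕ} (h : CompStep A B) :
    (A.map Hgf).prod = (B.map Hgf).prod := by
  cases h with
  | swap P Q a b _ _ _ _ =>
    simp only [List.map_append, List.prod_append, List.map_cons, List.map_nil,
      List.prod_cons, List.prod_nil]
    ring
  | merge P Q _ _ =>
    simp only [List.map_append, List.prod_append, List.map_cons, List.map_nil,
      List.prod_cons, List.prod_nil, ← Hgf_merge]
    ring

lemma cnt_step {A B : List ℕ} (h : CompStep A B) (n : ℕ) :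
    cnt (fun c => ¬ CompContains A c) n = cnt (fun c => ¬ CompContains B c) n := by
  have hgf : gfP (CompContains A) = gfP (CompContains B) := by
    rw [gf_contains, gf_contains, prodH_step h]
  have hc : cnt (CompContains A) n = cnt (CompContains B) n := by
    have h2 := congrArg (PowerSeries.coeff n) hgf
    rw [coeff_gfP, coeff_gfP] at h2
    exact_mod_cast h2
  have h1 := cnt_not_contains (CompContains A) n
  have h2 := cnt_not_contains (CompContains B) n
  omega

lemma sound {A B : List ℕ} (h : Relation.EqvGen CompStep A B) (n : ℕ) :
    cnt (fun c => ¬ CompContains A c) n = cnt (fun c => ¬ CompContains B c) n := by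
  induction h with
  | rel _ _ hstep => exact cnt_step hstep n
  | refl _ => rfl
  | symm _ _ _ ih => exact ih.symm
  | trans _ _ _ _ _ ih1 ih2 => exact ih1.trans ih2

lemma prodH_eq_of_cnt {A B : List ℕ}
    (h : ∀ n, cnt (fun c => ¬ CompContains A c) n = cnt (fun c => ¬ CompContains B c) n) :
    (A.map Hgf).prod = (B.map Hgf).prod := by
  have hgf : gfP (CompContains A) = gfP (CompContains B) := by
    ext n
    rw [coeff_gfP, coeff_gfP]
    have h1 := cnt_not_contains (CompContains A) n
    have h2 := cnt_not_contains (CompContains B) n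
    have := h n
    have : cnt (CompContains A) n = cnt (CompContains B) n := by omega
    exact_mod_cast this
  have := hgf
  rw [gf_contains, gf_contains] at this
  exact mul_right_cancel₀ Tot_ne_zero this

noncomputable def R (a : ℕ) : PowerSeries ℚ :=
  ((up a : Polynomial ℚ) : PowerSeries ℚ) * (1 - PowerSeries.X)

lemma up_one : up 1 = 1 := by
  rw [up]; simp

lemma up_two : up 2 = 1 - Polynomial.X := by
  rw [up, show Finset.Ico 1 2 = {1} from rfl]
  simp

lemma D_inv : D * (1 - PowerSeries.X) = 1 := by
  have h := gf_small_up 2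
  have e : ((up 2 : Polynomial ℚ) : PowerSeries ℚ) = 1 - PowerSeries.X := by
    rw [up_two, Polynomial.coe_sub, Polynomial.coe_one, Polynomial.coe_X]
  rw [e] at h
  exact h

lemma HR (a : ℕ) (ha : 0 < a) : Hgf a * R a = (PowerSeries.X : PowerSeries ℚ) ^ a := by
  rw [Hgf, gf_singGe a ha, R]
  calc gfP (small a) * (PowerSeries.X ^ a * D) * (((up a : Polynomial ℚ) : PowerSeries ℚ) * (1 - PowerSeries.X))
      = (gfP (small a) * ((up a : Polynomial ℚ) : PowerSeries ℚ)) * (D * (1 - PowerSeries.X)) * PowerSeries.X ^ a := by ring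
    _ = PowerSeries.X ^ a := by rw [gf_small_up, D_inv]; ring

lemma prod_HR (A : List ℕ) (hA : ∀ x ∈ A, 0 < x) :
    (A.map Hgf).prod * (A.map R).prod = (PowerSeries.X : PowerSeries ℚ) ^ A.sum := by
  induction A with
  | nil => simp
  | cons a A ih =>
    simp only [List.map_cons, List.prod_cons, List.sum_cons, pow_add]
    have ha := hA a (by simp)
    rw [show Hgf a * (A.map Hgf).prod * (R a * (A.map R).prod)
        = (Hgf a * R a) * ((A.map Hgf).prod * (A.map R).prod) from by ring,
      HR a ha, ih fun x hx => hA x (by simp [hx])]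

lemma R_prod_poly (A : List ℕ) :
    (A.map R).prod =
      (((A.map (fun a => up a * (1 - Polynomial.X))).prod : Polynomial ℚ) : PowerSeries ℚ) := by
  induction A with
  | nil => simp
  | cons a A ih =>
    simp only [List.map_cons, List.prod_cons, Polynomial.coe_mul, ← ih, R,
      Polynomial.coe_sub, Polynomial.coe_one, Polynomial.coe_X]

lemma poly_identity {A B : List ℕ} (hA : ∀ x ∈ A, 0 < x) (hB : ∀ x ∈ B, 0 < x)
    (h : (A.map Hgf).prod = (B.map Hgf).prod) :
    Polynomial.X ^ A.sum * (B.map (fun a => up a * (1 - Polynomial.X))).prod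
      = Polynomial.X ^ B.sum * (A.map (fun a => up a * (1 - Polynomial.X))).prod := by
  have e : (PowerSeries.X : PowerSeries ℚ) ^ A.sum * (B.map R).prod
      = (PowerSeries.X : PowerSeries ℚ) ^ B.sum * (A.map R).prod := by
    calc (PowerSeries.X : PowerSeries ℚ) ^ A.sum * (B.map R).prod
        = ((A.map Hgf).prod * (A.map R).prod) * (B.map R).prod := by rw [prod_HR A hA]
      _ = ((B.map Hgf).prod * (B.map R).prod) * (A.map R).prod := by rw [h]; ring
      _ = (PowerSeries.X : PowerSeries ℚ) ^ B.sum * (A.map R).prod := by rw [prod_HR B hB]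
  rw [R_prod_poly, R_prod_poly, ← Polynomial.coe_X (R := ℚ), ← Polynomial.coe_pow,
    ← Polynomial.coe_mul, ← Polynomial.coe_pow, ← Polynomial.coe_mul, Polynomial.coe_inj] at e
  exact e

lemma prod_up_mul (A : List ℕ) :
    (A.map (fun a => up a * (1 - Polynomial.X))).prod
      = (A.map up).prod * (1 - Polynomial.X) ^ A.length := by
  rw [List.prod_map_mul]
  congr 1
  rw [show (A.map fun _ => (1 - Polynomial.X : Polynomial ℚ)) =
    List.replicate A.length (1 - Polynomial.X) from List.map_const', List.prod_replicate]

lemma prod_up_split (A : List ℕ) (hA : ∀ x ∈ A, 0 < x) :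
    (A.map up).prod = ((A.filter (fun x => 3 ≤ x)).map up).prod
      * (1 - Polynomial.X) ^ (A.count 2) := by
  induction A with
  | nil => simp
  | cons a A ih =>
    have ha := hA a (by simp)
    have ih' := ih fun x hx => hA x (by simp [hx])
    rcases show a = 1 ∨ a = 2 ∨ 3 ≤ a by omega with rfl | rfl | h3
    · simp only [List.map_cons, List.prod_cons, up_one, one_mul, List.count_cons]
      rw [List.filter_cons_of_neg (by simp)]
      simpa using ih'
    · simp only [List.map_cons, List.prod_cons, up_two, List.count_cons]
      rw [List.filter_cons_of_neg (by simp)]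
      rw [ih']
      simp [pow_succ]
      ring
    · simp only [List.map_cons, List.prod_cons, List.count_cons]
      rw [List.filter_cons_of_pos (by simpa using h3)]
      rw [ih']
      have h2 : a ≠ 2 := by omega
      simp only [List.map_cons, List.prod_cons, List.count_cons, beq_iff_eq, h2, if_false]
      ring

lemma eval_up_zero (a : ℕ) : (up a).eval 0 = 1 := by
  rw [up]
  simp only [Polynomial.eval_sub, Polynomial.eval_one, Polynomial.eval_finset_sum,
    Polynomial.eval_pow, Polynomial.eval_X]
  rw [Finset.sum_eq_zero]
  · ring
  · intro i hi
    rw [Finset.mem_Ico] at hi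
    exact zero_pow (by omega)

lemma eval_up_one (a : ℕ) : (up a).eval 1 = 2 - (a : ℚ) ∨ a = 0 := by
  rcases Nat.eq_zero_or_pos a with rfl | ha
  · right; rfl
  · left
    rw [up]
    simp only [Polynomial.eval_sub, Polynomial.eval_one, Polynomial.eval_finset_sum,
      Polynomial.eval_pow, Polynomial.eval_X, one_pow]
    rw [Finset.sum_const, Nat.card_Ico]
    simp
    push_cast [Nat.cast_sub (by omega : 1 ≤ a)]
    ring

lemma eval0_prod_up (L : List ℕ) : ((L.map up).prod).eval 0 = 1 := by
  rw [Polynomial.eval_list_prod]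
  rw [List.prod_eq_one]
  intro x hx
  simp only [List.map_map, List.mem_map] at hx
  obtain ⟨a, _, rfl⟩ := hx
  exact eval_up_zero a

lemma eval1_prod_up (L : List ℕ) (hL : ∀ x ∈ L, 3 ≤ x) :
    ((L.map up).prod).eval 1 ≠ 0 := by
  rw [Polynomial.eval_list_prod]
  induction L with
  | nil => simp
  | cons a L ih =>
    simp only [List.map_cons, List.prod_cons, mul_ne_zero_iff]
    constructor
    · have h3 := hL a (by simp)
      rcases eval_up_one a with h | h
      · rw [h]
        have : (3 : ℚ) ≤ (a : ℚ) := by exact_mod_cast h3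
        intro hc
        have : (a : ℚ) = 2 := by linarith
        have : a = 2 := by exact_mod_cast this
        omega
      · omega
    · exact ih fun x hx => hL x (by simp [hx])

lemma one_sub_X_ne_zero : (1 - Polynomial.X : Polynomial ℚ) ≠ 0 := by
  intro h
  have := congrArg (Polynomial.eval 0) h
  simp at this

lemma pow_mul_cancel_one (x : Polynomial ℚ) (hx : x ≠ 0) (φ : Polynomial ℚ →+* ℚ)
    (hφx : φ x = 0) {m k : ℕ} {P Q : Polynomial ℚ} (hQ : φ Q ≠ 0) (hmk : m ≤ k)
    (h : x ^ m * Q = x ^ k * P) : m = k ∧ Q = P := by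
  have h2 : x ^ m * Q = x ^ m * (x ^ (k - m) * P) := by
    rw [← mul_assoc, ← pow_add, h]
    congr 2
    omega
  have hQP : Q = x ^ (k - m) * P := mul_left_cancel₀ (pow_ne_zero m hx) h2
  rcases Nat.eq_zero_or_pos (k - m) with h0 | h0
  · constructor
    · omega
    · rw [hQP, h0, pow_zero, one_mul]
  · exfalso
    apply hQ
    rw [hQP, map_mul, map_pow, hφx, zero_pow (by omega), zero_mul]

lemma pow_mul_cancel (x : Polynomial ℚ) (hx : x ≠ 0) (φ : Polynomial ℚ →+* ℚ)
    (hφx : φ x = 0) {m k : ℕ} {P Q : Polynomial ℚ} (hP : φ P ≠ 0) (hQ : φ Q ≠ 0)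
    (h : x ^ m * Q = x ^ k * P) : m = k ∧ Q = P := by
  rcases le_total m k with hmk | hmk
  · exact pow_mul_cancel_one x hx φ hφx hQ hmk h
  · obtain ⟨e1, e2⟩ := pow_mul_cancel_one x hx φ hφx hP hmk h.symm
    exact ⟨e1.symm, e2.symm⟩

/-- From equal H-products extract: equal sums and equal products of `up` over big parts. -/
lemma extract {A B : List ℕ} (hA : ∀ x ∈ A, 0 < x) (hB : ∀ x ∈ B, 0 < x)
    (h : (A.map Hgf).prod = (B.map Hgf).prod) :
    A.sum = B.sum ∧
      ((A.filter (fun x => 3 ≤ x)).map up).prod = ((B.filter (fun x => 3 ≤ x)).map up).prod := by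
  have hfA : ∀ x ∈ A.filter (fun x => 3 ≤ x), 3 ≤ x := by
    intro x hx
    have := List.mem_filter.1 hx
    simpa using this.2
  have hfB : ∀ x ∈ B.filter (fun x => 3 ≤ x), 3 ≤ x := by
    intro x hx
    have := List.mem_filter.1 hx
    simpa using this.2
  have key := poly_identity hA hB h
  rw [prod_up_mul, prod_up_mul, prod_up_split A hA, prod_up_split B hB] at key
  -- key : X^ΣA * (UB * (1-X)^c2B * (1-X)^|B|) = X^ΣB * (UA * (1-X)^c2A * (1-X)^|A|)
  have key2 : Polynomial.X ^ A.sum *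
      (((B.filter (fun x => 3 ≤ x)).map up).prod * (1 - Polynomial.X) ^ (B.count 2 + B.length))
      = Polynomial.X ^ B.sum *
      (((A.filter (fun x => 3 ≤ x)).map up).prod * (1 - Polynomial.X) ^ (A.count 2 + A.length)) := by
    rw [pow_add, pow_add]
    calc _ = Polynomial.X ^ A.sum * (((B.filter (fun x => 3 ≤ x)).map up).prod
        * (1 - Polynomial.X) ^ B.count 2 * (1 - Polynomial.X) ^ B.length) := by ring
      _ = Polynomial.X ^ B.sum * (((A.filter (fun x => 3 ≤ x)).map up).prod
        * (1 - Polynomial.X) ^ A.count 2 * (1 - Polynomial.X) ^ A.length) := key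
      _ = _ := by ring
  have hQ : (Polynomial.evalRingHom (0:ℚ))
      (((B.filter (fun x => 3 ≤ x)).map up).prod * (1 - Polynomial.X) ^ (B.count 2 + B.length)) ≠ 0 := by
    simp only [Polynomial.coe_evalRingHom, Polynomial.eval_mul, Polynomial.eval_pow,
      Polynomial.eval_sub, Polynomial.eval_one, Polynomial.eval_X, eval0_prod_up]
    norm_num
  have hP : (Polynomial.evalRingHom (0:ℚ))
      (((A.filter (fun x => 3 ≤ x)).map up).prod * (1 - Polynomial.X) ^ (A.count 2 + A.length)) ≠ 0 := by
    simp only [Polynomial.coe_evalRingHom, Polynomial.eval_mul, Polynomial.eval_pow,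
      Polynomial.eval_sub, Polynomial.eval_one, Polynomial.eval_X, eval0_prod_up]
    norm_num
  obtain ⟨hsum, key3⟩ := pow_mul_cancel Polynomial.X Polynomial.X_ne_zero
    (Polynomial.evalRingHom (0:ℚ)) (by simp) hP hQ key2
  refine ⟨hsum, ?_⟩
  -- now cancel (1-X) powers using evaluation at 1
  have h1Q : (Polynomial.evalRingHom (1:ℚ)) (((B.filter (fun x => 3 ≤ x)).map up).prod) ≠ 0 := by
    simpa only [Polynomial.coe_evalRingHom] using eval1_prod_up _ hfB
  have h1P : (Polynomial.evalRingHom (1:ℚ)) (((A.filter (fun x => 3 ≤ x)).map up).prod) ≠ 0 := by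
    simpa only [Polynomial.coe_evalRingHom] using eval1_prod_up _ hfA
  have key4 : (1 - Polynomial.X) ^ (B.count 2 + B.length) * ((B.filter (fun x => 3 ≤ x)).map up).prod
      = (1 - Polynomial.X) ^ (A.count 2 + A.length) * ((A.filter (fun x => 3 ≤ x)).map up).prod := by
    rw [mul_comm, mul_comm ((1 - Polynomial.X) ^ (A.count 2 + A.length)) _]
    exact key3
  obtain ⟨_, e⟩ := pow_mul_cancel (1 - Polynomial.X) one_sub_X_ne_zero
    (Polynomial.evalRingHom (1:ℚ)) (by simp) h1P h1Q key4
  exact e.symm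

end CW
namespace CW
open List
open scoped Classical

noncomputable def fr (a : ℕ) (r : ℝ) : ℝ := 1 - ∑ i ∈ Finset.Ico 1 a, r ^ i

lemma aeval_up (a : ℕ) (r : ℝ) : (Polynomial.aeval r) (up a) = fr a r := by
  rw [up, fr]
  simp

lemma fr_root (a : ℕ) (ha : 3 ≤ a) : ∃ r : ℝ, 1/2 ≤ r ∧ r ≤ 1 ∧ fr a r = 0 := by
  have hc : ContinuousOn (fr a) (Set.Icc (1/2 : ℝ) 1) := by
    apply Continuous.continuousOn
    unfold fr
    continuity
  have h1 : fr a 1 ≤ 0 := by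
    have e : ∑ i ∈ Finset.Ico 1 a, (1:ℝ)^i = ((a - 1 : ℕ) : ℝ) := by
      simp [Finset.sum_const, Nat.card_Ico, nsmul_eq_mul]
    have h2a : (2:ℝ) ≤ ((a - 1 : ℕ) : ℝ) := by
      exact_mod_cast (show (2:ℕ) ≤ a - 1 by omega)
    unfold fr
    rw [e]
    linarith
  have h2 : 0 ≤ fr a (1/2 : ℝ) := by
    have hgs : ∑ i ∈ Finset.range a, (1/2:ℝ)^i = ((1/2:ℝ)^a - 1)/((1/2:ℝ) - 1) :=
      geom_sum_eq (by norm_num) a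
    have hsplit : (∑ i ∈ Finset.Ico 0 1, (1/2:ℝ)^i) + ∑ i ∈ Finset.Ico 1 a, (1/2:ℝ)^i
        = ∑ i ∈ Finset.Ico 0 a, (1/2:ℝ)^i :=
      Finset.sum_Ico_consecutive _ (by norm_num) (by omega)
    have h01 : (∑ i ∈ Finset.Ico 0 1, (1/2:ℝ)^i) = 1 := by
      rw [show Finset.Ico 0 1 = {0} from rfl]
      simp
    have hr : ∑ i ∈ Finset.Ico 1 a, (1/2:ℝ)^i = (∑ i ∈ Finset.range a, (1/2:ℝ)^i) - 1 := by
      rw [Finset.range_eq_Ico, ← hsplit, h01]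
      ring
    have hp : (0:ℝ) < (1/2:ℝ)^a := by positivity
    unfold fr
    rw [hr, hgs]
    have : ((1/2:ℝ)^a - 1)/((1/2:ℝ) - 1) = 2 * (1 - (1/2:ℝ)^a) := by
      field_simp
      ring
    rw [this]
    linarith
  have hm := intermediate_value_Icc' (by norm_num : (1/2:ℝ) ≤ 1) hc
  have h0 : (0:ℝ) ∈ Set.Icc (fr a 1) (fr a (1/2:ℝ)) := ⟨h1, h2⟩
  obtain ⟨r, hr, hfr⟩ := hm h0
  exact ⟨r, hr.1, hr.2, hfr⟩

lemma fr_gt {a b : ℕ} (hb : 1 ≤ b) (hba : b < a) {r : ℝ} (hr : 0 < r)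
    (hroot : fr a r = 0) : 0 < fr b r := by
  have hsplit : (∑ i ∈ Finset.Ico 1 b, r^i) + ∑ i ∈ Finset.Ico b a, r^i
      = ∑ i ∈ Finset.Ico 1 a, r^i :=
    Finset.sum_Ico_consecutive _ hb (le_of_lt hba)
  have hpos : 0 < ∑ i ∈ Finset.Ico b a, r^i :=
    Finset.sum_pos (fun i _ => pow_pos hr i) (Finset.nonempty_Ico.2 hba)
  unfold fr at *
  linarith

lemma up_ne_zero (a : ℕ) : up a ≠ 0 := by
  intro h
  have := congrArg (Polynomial.eval 0) h
  rw [eval_up_zero] at this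
  simp at this

lemma prod_up_ne {a : ℕ} (ha : 3 ≤ a) {LA LB : List ℕ} (hmemA : a ∈ LA)
    (hB : ∀ b ∈ LB, 1 ≤ b ∧ b < a) : (LA.map up).prod ≠ (LB.map up).prod := by
  intro h
  obtain ⟨r, hr1, hr2, hroot⟩ := fr_root a ha
  have hrpos : 0 < r := by linarith
  have hL : (Polynomial.aeval r) (LA.map up).prod = 0 := by
    rw [map_list_prod]
    apply List.prod_eq_zero
    rw [List.map_map]
    refine List.mem_map.2 ⟨a, hmemA, ?_⟩
    simp only [Function.comp_apply, aeval_up, hroot]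
  have hR : (Polynomial.aeval r) (LB.map up).prod ≠ 0 := by
    rw [map_list_prod]
    have hpos : 0 < (((LB.map up)).map (Polynomial.aeval r)).prod := by
      apply List.prod_pos
      intro x hx
      rw [List.map_map] at hx
      obtain ⟨b, hb, rfl⟩ := List.mem_map.1 hx
      simp only [Function.comp_apply, aeval_up]
      exact fr_gt (hB b hb).1 (hB b hb).2 hrpos hroot
    exact ne_of_gt hpos
  rw [h] at hL
  exact hR hL

lemma perm_of_prod_up : ∀ (k : ℕ) (LA LB : List ℕ), LA.length + LB.length ≤ k →
    (∀ x ∈ LA, 3 ≤ x) → (∀ x ∈ LB, 3 ≤ x) →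
    (LA.map up).prod = (LB.map up).prod → LA.Perm LB := by
  intro k
  induction k with
  | zero =>
    intro LA LB hlen _ _ _
    have h1 : LA = [] := List.length_eq_zero_iff.1 (by omega)
    have h2 : LB = [] := List.length_eq_zero_iff.1 (by omega)
    rw [h1, h2]
  | succ k ih =>
    intro LA LB hlen h3A h3B hprod
    by_cases hAB : LA ++ LB = []
    · rw [List.append_eq_nil_iff] at hAB
      rw [hAB.1, hAB.2]
    · have hne : (LA ++ LB).toFinset.Nonempty := by
        rw [Finset.nonempty_iff_ne_empty]
        intro h
        apply hAB
        rwa [← List.toFinset_eq_empty_iff]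
      set a := (LA ++ LB).toFinset.max' hne with hadef
      have hmem : a ∈ LA ++ LB := by
        have := Finset.max'_mem _ hne
        rwa [List.mem_toFinset] at this
      have hle : ∀ b ∈ LA ++ LB, b ≤ a := fun b hb =>
        Finset.le_max' _ b (List.mem_toFinset.2 hb)
      have ha3 : 3 ≤ a := by
        rcases List.mem_append.1 hmem with h | h
        exacts [h3A _ h, h3B _ h]
      by_cases haA : a ∈ LA
      · by_cases haB : a ∈ LB
        · have pA : LA.Perm (a :: LA.erase a) := List.perm_cons_erase haA
          have pB : LB.Perm (a :: LB.erase a) := List.perm_cons_erase haB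
          have e1 : (LA.map up).prod = up a * ((LA.erase a).map up).prod := by
            have := (pA.map up).prod_eq
            simpa using this
          have e2 : (LB.map up).prod = up a * ((LB.erase a).map up).prod := by
            have := (pB.map up).prod_eq
            simpa using this
          have hup : up a * ((LA.erase a).map up).prod
              = up a * ((LB.erase a).map up).prod := by
            rw [← e1, ← e2, hprod]
          have hup2 := mul_left_cancel₀ (up_ne_zero a) hup
          have hlenA : (LA.erase a).length = LA.length - 1 := by
            rw [List.length_erase_of_mem haA]
          have hlenB : (LB.erase a).length = LB.length - 1 := by
            rw [List.length_erase_of_mem haB]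
          have hlA : 1 ≤ LA.length := by
            cases LA
            · simp at haA
            · simp
          have hlB : 1 ≤ LB.length := by
            cases LB
            · simp at haB
            · simp
          have hperm := ih (LA.erase a) (LB.erase a) (by omega)
            (fun x hx => h3A x (List.mem_of_mem_erase hx))
            (fun x hx => h3B x (List.mem_of_mem_erase hx)) hup2
          exact pA.trans ((hperm.cons a).trans pB.symm)
        · exfalso
          have hBlt : ∀ b ∈ LB, 1 ≤ b ∧ b < a := fun b hb =>
            ⟨by have := h3B b hb; omega,
             lt_of_le_of_ne (hle b (by simp [hb])) (fun e => haB (e ▸ hb))⟩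
          exact prod_up_ne ha3 haA hBlt hprod
      · have haB : a ∈ LB := by
          rcases List.mem_append.1 hmem with h | h
          · exact absurd h haA
          · exact h
        exfalso
        have hAlt : ∀ b ∈ LA, 1 ≤ b ∧ b < a := fun b hb =>
          ⟨by have := h3A b hb; omega,
           lt_of_le_of_ne (hle b (by simp [hb])) (fun e => haA (e ▸ hb))⟩
        exact prod_up_ne ha3 haB hAlt hprod.symm

end CW
namespace CW
open List
open scoped Classical

lemma compStep_cons {x : ℕ} (hx : 0 < x) {l l' : List ℕ} (h : CompStep l l') :
    CompStep (x::l) (x::l') := by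
  cases h with
  | swap P Q a b hP hQ ha hb =>
    have h2 := CompStep.swap (x::P) Q a b
      (by intro y hy; rcases List.mem_cons.1 hy with rfl | hy; exact hx; exact hP y hy)
      hQ ha hb
    simpa using h2
  | merge P Q hP hQ =>
    have h2 := CompStep.merge (x::P) Q
      (by intro y hy; rcases List.mem_cons.1 hy with rfl | hy; exact hx; exact hP y hy)
      hQ
    simpa using h2

lemma eqv_cons {x : ℕ} (hx : 0 < x) {l l' : List ℕ}
    (h : Relation.EqvGen CompStep l l') : Relation.EqvGen CompStep (x::l) (x::l') := by
  induction h with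
  | rel _ _ h => exact .rel _ _ (compStep_cons hx h)
  | refl _ => exact .refl _
  | symm _ _ _ ih => exact .symm _ _ ih
  | trans _ _ _ _ _ ih1 ih2 => exact .trans _ _ _ ih1 ih2

lemma eqv_append {F : List ℕ} (hF : ∀ x ∈ F, 0 < x) {l l' : List ℕ}
    (h : Relation.EqvGen CompStep l l') :
    Relation.EqvGen CompStep (F ++ l) (F ++ l') := by
  induction F with
  | nil => simpa using h
  | cons f F ih =>
    simp only [List.cons_append]
    exact eqv_cons (hF f (by simp)) (ih fun x hx => hF x (by simp [hx]))

lemma eqv_perm : ∀ {A B : List ℕ}, A.Perm B → (∀ x ∈ A, 0 < x) →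
    Relation.EqvGen CompStep A B := by
  intro A B h
  induction h with
  | nil => intro _; exact .refl _
  | cons x _ ih =>
    intro hpos
    exact eqv_cons (hpos x (by simp)) (ih fun y hy => hpos y (by simp [hy]))
  | swap x y l =>
    intro hpos
    have h2 := CompStep.swap [] l y x (by simp) (fun z hz => hpos z (by simp [hz]))
      (hpos y (by simp)) (hpos x (by simp [List.mem_cons]))
    exact .rel _ _ (by simpa using h2)
  | trans h1 _ ih1 ih2 =>
    intro hpos
    exact .trans _ _ _ (ih1 hpos) (ih2 fun y hy => hpos y (h1.mem_iff.2 hy))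

lemma eqv_ones_twos : ∀ (k : ℕ) (O : List ℕ), O.length ≤ k → (∀ x ∈ O, x = 1 ∨ x = 2) →
    Relation.EqvGen CompStep O
      (List.replicate (O.sum / 2) 2 ++ List.replicate (O.sum % 2) 1) := by
  intro k
  induction k with
  | zero =>
    intro O hl _
    have h0 : O = [] := List.length_eq_zero_iff.1 (by omega)
    subst h0
    exact .refl _
  | succ k ih =>
    intro O hl h12
    have hOpos : ∀ x ∈ O, 0 < x := fun x hx => by rcases h12 x hx with rfl | rfl <;> omega
    by_cases h2 : 2 ≤ O.count 1
    · have h1mem : 1 ∈ O := by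
        rw [← List.count_pos_iff]
        omega
      have p1 : O.Perm (1 :: O.erase 1) := List.perm_cons_erase h1mem
      have h1mem2 : 1 ∈ O.erase 1 := by
        rw [← List.count_pos_iff, List.count_erase_self]
        omega
      have p2 : (O.erase 1).Perm (1 :: (O.erase 1).erase 1) := List.perm_cons_erase h1mem2
      set O' := (O.erase 1).erase 1 with hO'
      have hO'sub : ∀ x ∈ O', x ∈ O := fun x hx =>
        List.mem_of_mem_erase (List.mem_of_mem_erase hx)
      have step : CompStep (1::1::O') (2::O') := by
        have h3 := CompStep.merge [] O' (by simp) (fun x hx => hOpos x (hO'sub x hx))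
        simpa using h3
      have perm0 : O.Perm (1::1::O') := p1.trans (p2.cons 1)
      have e1 : Relation.EqvGen CompStep O (1::1::O') := eqv_perm perm0 hOpos
      have hsum : (2::O').sum = O.sum := by
        have hs := perm0.sum_eq
        simp only [List.sum_cons] at hs ⊢
        omega
      have hlen : (2::O').length ≤ k := by
        have l1 := perm0.length_eq
        simp only [List.length_cons] at l1 ⊢
        omega
      have e3 := ih (2::O') hlen (by
        intro x hx
        rcases List.mem_cons.1 hx with rfl | hx
        · right; rfl
        · exact h12 x (hO'sub x hx))
      rw [hsum] at e3
      exact .trans _ _ _ e1 (.trans _ _ _ (.rel _ _ step) e3)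
    · set c1 := O.count 1 with hc1
      set c2 := O.count 2 with hc2
      have hperm : O.Perm (List.replicate c2 2 ++ List.replicate c1 1) := by
        rw [List.perm_iff_count]
        intro x
        rw [List.count_append, List.count_replicate, List.count_replicate]
        by_cases hx1 : x = 1
        · subst hx1; simp [hc1]
        · by_cases hx2 : x = 2
          · subst hx2; simp [hc2]
          · have h0 : O.count x = 0 := by
              rw [List.count_eq_zero]
              intro hmem
              rcases h12 x hmem with rfl | rfl
              · exact hx1 rfl
              · exact hx2 rfl
            rw [h0]
            have e1 : ((2:ℕ) == x) = false := by simpa using (fun e => hx2 e.symm)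
            have e2 : ((1:ℕ) == x) = false := by simpa using (fun e => hx1 e.symm)
            rw [e1, e2]
            simp
      have hsum : O.sum = 2 * c2 + c1 := by
        have hs := hperm.sum_eq
        rw [hs, List.sum_append, List.sum_replicate, List.sum_replicate]
        simp [Nat.smul_one_eq_cast]
        ring
      have hc1le : c1 ≤ 1 := by omega
      have hdiv : O.sum / 2 = c2 := by omega
      have hmod : O.sum % 2 = c1 := by omega
      rw [hdiv, hmod]
      exact eqv_perm hperm hOpos

lemma eqv_canon (A : List ℕ) (hA : ∀ x ∈ A, 0 < x) :
    Relation.EqvGen CompStep A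
      ((A.filter (fun x => 3 ≤ x)) ++
        (List.replicate ((A.filter (fun x => !(decide (3 ≤ x)))).sum / 2) 2 ++
         List.replicate ((A.filter (fun x => !(decide (3 ≤ x)))).sum % 2) 1)) := by
  set F := A.filter (fun x => 3 ≤ x) with hF
  set O := A.filter (fun x => !(decide (3 ≤ x))) with hO
  have perm1 : (F ++ O).Perm A := List.filter_append_perm _ A
  have hOmem : ∀ x ∈ O, x ∈ A ∧ ¬ (3 ≤ x) := by
    intro x hx
    rw [hO, List.mem_filter] at hx
    refine ⟨hx.1, ?_⟩
    simpa using hx.2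
  have hO12 : ∀ x ∈ O, x = 1 ∨ x = 2 := by
    intro x hx
    have h1 := (hOmem x hx).1
    have h2 := (hOmem x hx).2
    have := hA x h1
    omega
  have hFpos : ∀ x ∈ F, 0 < x := by
    intro x hx
    rw [hF, List.mem_filter] at hx
    exact hA x hx.1
  have e2 := eqv_ones_twos O.length O le_rfl hO12
  have e3 : Relation.EqvGen CompStep (F ++ O) _ := eqv_append hFpos e2
  have e1 : Relation.EqvGen CompStep A (F ++ O) :=
    eqv_perm perm1.symm hA
  exact .trans _ _ _ e1 e3

lemma eqv_of_invariants {A B : List ℕ} (hA : ∀ x ∈ A, 0 < x) (hB : ∀ x ∈ B, 0 < x)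
    (hsum : A.sum = B.sum)
    (hperm : (A.filter (fun x => 3 ≤ x)).Perm (B.filter (fun x => 3 ≤ x))) :
    Relation.EqvGen CompStep A B := by
  set FA := A.filter (fun x => 3 ≤ x) with hFA
  set OA := A.filter (fun x => !(decide (3 ≤ x))) with hOA
  set FB := B.filter (fun x => 3 ≤ x) with hFB
  set OB := B.filter (fun x => !(decide (3 ≤ x))) with hOB
  have hsA : FA.sum + OA.sum = A.sum := by
    have := (List.filter_append_perm (fun x => decide (3 ≤ x)) A).sum_eq
    rw [← this, List.sum_append]
  have hsB : FB.sum + OB.sum = B.sum := by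
    have := (List.filter_append_perm (fun x => decide (3 ≤ x)) B).sum_eq
    rw [← this, List.sum_append]
  have hFsum : FA.sum = FB.sum := hperm.sum_eq
  have hOsum : OA.sum = OB.sum := by omega
  have c1 := eqv_canon A hA
  have c2 := eqv_canon B hB
  rw [← hFA, ← hOA] at c1
  rw [← hFB, ← hOB] at c2
  have hcanonpos : ∀ x ∈ FA ++ (List.replicate (OA.sum / 2) 2 ++ List.replicate (OA.sum % 2) 1), 0 < x := by
    intro x hx
    rcases List.mem_append.1 hx with h | h
    · rw [hFA, List.mem_filter] at h
      exact hA x h.1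
    · rcases List.mem_append.1 h with h | h
      · rw [List.eq_of_mem_replicate h]; omega
      · rw [List.eq_of_mem_replicate h]; omega
  have pmid : (FA ++ (List.replicate (OA.sum / 2) 2 ++ List.replicate (OA.sum % 2) 1)).Perm
      (FB ++ (List.replicate (OB.sum / 2) 2 ++ List.replicate (OB.sum % 2) 1)) := by
    rw [← hOsum]
    exact hperm.append (List.Perm.refl _)
  have emid := eqv_perm pmid hcanonpos
  exact .trans _ _ _ c1 (.trans _ _ _ emid (.symm _ _ c2))

end CW


/-- The smallest equivalence relation `∼` generated by `CompStep` is sound and complete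
for Wilf-equivalence of composition patterns. -/
theorem comp_wilf_iff_eqvGen (A B : List ℕ) (hA : ∀ x ∈ A, 0 < x) (hB : ∀ x ∈ B, 0 < x) :
    (∀ n : ℕ,
        Nat.card {c : List ℕ // (∀ x ∈ c, 0 < x) ∧ c.sum = n ∧ ¬ CompContains A c} =
        Nat.card {c : List ℕ // (∀ x ∈ c, 0 < x) ∧ c.sum = n ∧ ¬ CompContains B c}) ↔
      Relation.EqvGen CompStep A B := by
  classical
  have hcard : ∀ (C : List ℕ) (n : ℕ),
      Nat.card {c : List ℕ // (∀ x ∈ c, 0 < x) ∧ c.sum = n ∧ ¬ CompContains C c} =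
        CW.cnt (fun c => ¬ CompContains C c) n := by
    intro C n
    rw [CW.cnt, ← Nat.card_eq_finsetCard]
    apply Nat.card_congr
    apply Equiv.subtypeEquivRight
    intro c
    rw [CW.mem_cntset]
  constructor
  · intro h
    have hcnt : ∀ n, CW.cnt (fun c => ¬ CompContains A c) n
        = CW.cnt (fun c => ¬ CompContains B c) n := by
      intro n
      rw [← hcard A n, ← hcard B n]
      exact h n
    have hprod := CW.prodH_eq_of_cnt hcnt
    obtain ⟨hsum, hup⟩ := CW.extract hA hB hprod
    have hfA : ∀ x ∈ A.filter (fun x => 3 ≤ x), 3 ≤ x := by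
      intro x hx
      have := List.mem_filter.1 hx
      simpa using this.2
    have hfB : ∀ x ∈ B.filter (fun x => 3 ≤ x), 3 ≤ x := by
      intro x hx
      have := List.mem_filter.1 hx
      simpa using this.2
    have hperm := CW.perm_of_prod_up
      ((A.filter (fun x => 3 ≤ x)).length + (B.filter (fun x => 3 ≤ x)).length)
      _ _ le_rfl hfA hfB hup
    exact CW.eqv_of_invariants hA hB hsum hperm
  · intro h n
    rw [hcard A n, hcard B n]
    exact CW.sound h n
end
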